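/- arXiv:1509.08101 — 6 statements merged into one kernel-verified Lean document; each statement's English description precedes it below -/
import Mathlib

section
/- Let k, l, m be positive integers with m ≤ 2^((k-3)/l - 1), and let σ_R(z) = max{0, z} be the ReLU. Then there exists a collection of n := 2^k labeled points ((x_i, y_i))_{i=1}^n with x_i ∈ [0,1] and y_i ∈ {0,1} such that: (1) some network f ∈ 𝔑(σ_R; 2, 2k) achieves classification error R_z(f) = 0, and (2) every network g ∈ 𝔑(σ_R; m, l) has classification error R_z(g) ≥ 1/6. -/
noncomputable section

/-- A function `f : ℝ → ℝ` is `t`-sawtooth if `ℝ` is partitioned into `t` consecutive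
intervals (delimited by extended-real breakpoints `b 0 = ⊥ ≤ b 1 ≤ ⋯ ≤ b t = ⊤`)
and `f` is affine on each interval `[b i, b (i+1))`. -/
def Sawtooth (t : ℕ) (f : ℝ → ℝ) : Prop :=
  ∃ b : Fin (t + 1) → EReal,
    b 0 = ⊥ ∧ b (Fin.last t) = ⊤ ∧ Monotone b ∧
    ∀ i : Fin t, ∃ c d : ℝ, ∀ x : ℝ,
      b i.castSucc ≤ (x : EReal) → (x : EReal) < b i.succ → f x = c * x + d

/-- `g : ℝ → ℕ` is piecewise constant w.r.t. a partition of `ℝ` into `s` consecutive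
intervals. -/
def PiecewiseConst (s : ℕ) (g : ℝ → ℕ) : Prop :=
  ∃ b : Fin (s + 1) → EReal,
    b 0 = ⊥ ∧ b (Fin.last s) = ⊤ ∧ Monotone b ∧
    ∀ i : Fin s, ∃ c : ℕ, ∀ x : ℝ,
      b i.castSucc ≤ (x : EReal) → (x : EReal) < b i.succ → g x = c

/-- `IsLayers σ m l d F` : `F : ℝ → Fin d → ℝ` is the joint output of `l` layers of a
feedforward network with nonlinearity `σ`, each layer having at most `m` nodes. -/
inductive IsLayers (σ : ℝ → ℝ) (m : ℕ) : ℕ → (d : ℕ) → (ℝ → Fin d → ℝ) → Prop where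
  | base (d : ℕ) (hd : d ≤ m) (w b : Fin d → ℝ) :
      IsLayers σ m 1 d (fun x j => σ (b j + w j * x))
  | step (l d d' : ℕ) (F : ℝ → Fin d' → ℝ) (hF : IsLayers σ m l d' F) (hd : d ≤ m)
      (w : Fin d → Fin d' → ℝ) (b : Fin d → ℝ) :
      IsLayers σ m (l + 1) d (fun x j => σ (b j + ∑ i, w j i * F x i))

/-- The class `𝔑(σ; m, l)` of functions computed by feedforward networks with `l` layers
of at most `m` nodes each, the final layer consisting of a single node. -/
def NN (σ : ℝ → ℝ) (m l : ℕ) : Set (ℝ → ℝ) :=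
  {f | ∃ F : ℝ → Fin 1 → ℝ, IsLayers σ m l 1 F ∧ ∀ x, f x = F x 0}

/-- The recurrent class `ℜ(σ; m, l; k)`: a fixed network in `𝔑(σ; m, l)` iterated `k` times. -/
def RNN (σ : ℝ → ℝ) (m l k : ℕ) : Set (ℝ → ℝ) :=
  {f | ∃ g ∈ NN σ m l, f = g^[k]}

/-- The ReLU nonlinearity. -/
def relu (z : ℝ) : ℝ := max 0 z

/-- The classifier associated with `f`: `x ↦ 𝟙[f x ≥ 1/2]`. -/
def cls (f : ℝ → ℝ) (x : ℝ) : ℕ := if 1 / 2 ≤ f x then 1 else 0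

/-- Classification error of `f` on the labeled points `(x i, y i)`. -/
def clsErr (n : ℕ) (x : Fin n → ℝ) (y : Fin n → ℕ) (f : ℝ → ℝ) : ℝ :=
  (n : ℝ)⁻¹ * ∑ i, if cls f (x i) = y i then 0 else 1

/-- The `x`-coordinates of the `n`-alternating-point problem: `x i = i / n`. -/
def apX (n : ℕ) (i : Fin n) : ℝ := (i : ℕ) / n

/-- The labels of the `n`-alternating-point problem: `y i = i mod 2`. -/
def apY (n : ℕ) (i : Fin n) : ℕ := (i : ℕ) % 2

/-- The mirror map. -/
def fm (x : ℝ) : ℝ :=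
  if 0 ≤ x ∧ x ≤ 1 / 2 then 2 * x
  else if 1 / 2 < x ∧ x ≤ 1 then 2 * (1 - x)
  else 0

set_option maxHeartbeats 1000000

/-- one double-layer mirror map as computed by the network -/
def fml (x : ℝ) : ℝ := relu (2 * relu x + (-4) * relu (x - 1/2))


lemma relu_of_nonneg {x : ℝ} (h : 0 ≤ x) : relu x = x := max_eq_right h
lemma relu_of_nonpos {x : ℝ} (h : x ≤ 0) : relu x = 0 := max_eq_left h

lemma fml_lo {x : ℝ} (h0 : 0 ≤ x) (h1 : x ≤ 1/2) : fml x = 2 * x := by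
  unfold fml
  rw [relu_of_nonneg h0, relu_of_nonpos (x := x - 1/2) (by linarith),
    relu_of_nonneg (x := 2 * x + (-4) * 0) (by linarith)]
  ring

lemma fml_hi {x : ℝ} (h0 : 1/2 ≤ x) (h1 : x ≤ 1) : fml x = 2 - 2 * x := by
  unfold fml
  rw [relu_of_nonneg (x := x) (by linarith), relu_of_nonneg (x := x - 1/2) (by linarith),
    relu_of_nonneg (x := 2 * x + (-4) * (x - 1/2)) (by linarith)]
  ring

lemma fml_iter (k : ℕ) : ∀ i : ℕ, i ≤ 2 ^ k → fml^[k] ((i : ℝ) / 2 ^ k) = ((i % 2 : ℕ) : ℝ) := by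
  induction k with
  | zero =>
      intro i hi
      interval_cases i <;> norm_num
  | succ k ih =>
      intro i hi
      have h2 : (0:ℝ) < 2 ^ k := by positivity
      have h2' : (0:ℝ) < 2 ^ (k+1) := by positivity
      rw [Function.iterate_succ_apply]
      rcases le_or_gt i (2 ^ k) with h | h
      · have hx0 : (0:ℝ) ≤ (i : ℝ) / 2 ^ (k+1) := by positivity
        have hx1 : (i : ℝ) / 2 ^ (k+1) ≤ 1/2 := by
          rw [div_le_iff₀ h2']
          have : (i:ℝ) ≤ 2 ^ k := by exact_mod_cast h
          rw [pow_succ]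
          linarith
        rw [fml_lo hx0 hx1]
        have : 2 * ((i:ℝ) / 2 ^ (k+1)) = (i:ℝ) / 2 ^ k := by
          rw [pow_succ]; field_simp
        rw [this]
        exact ih i h
      · set j := 2 ^ (k+1) - i with hj
        have hij : i + j = 2 ^ (k+1) := by omega
        have hjle : j ≤ 2 ^ k := by
          have : 2 ^ (k+1) = 2 * 2 ^ k := by ring
          omega
        have hx0 : (1:ℝ)/2 ≤ (i : ℝ) / 2 ^ (k+1) := by
          rw [le_div_iff₀ h2']
          have : (2:ℝ) ^ k ≤ (i:ℝ) := by exact_mod_cast h.le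
          rw [pow_succ]
          linarith
        have hx1 : (i : ℝ) / 2 ^ (k+1) ≤ 1 := by
          rw [div_le_one h2']
          exact_mod_cast hi
        rw [fml_hi hx0 hx1]
        have hcast : 2 - 2 * ((i:ℝ) / 2 ^ (k+1)) = (j:ℝ) / 2 ^ k := by
          have hji : (j:ℝ) = 2 ^ (k+1) - (i:ℝ) := by
            have : ((i + j : ℕ) : ℝ) = ((2 ^ (k+1) : ℕ) : ℝ) := by rw [hij]
            push_cast at this
            linarith
          rw [hji, pow_succ]
          field_simp
        rw [hcast, ih j hjle]
        congr 1
        have : 2 ^ (k+1) = 2 * 2 ^ k := by ring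
        omega


/-- helper: given `F` computing `v`, two more layers compute `fml v`. -/
lemma two_more_layers {m l : ℕ} (hm : 2 ≤ m) (F : ℝ → Fin 1 → ℝ)
    (hF : IsLayers relu m l 1 F) :
    ∃ G : ℝ → Fin 1 → ℝ, IsLayers relu m (l + 2) 1 G ∧ ∀ x, G x 0 = fml (F x 0) := by
  have h1 : IsLayers relu m (l + 1) 2
      (fun x j => relu ((![0, -(1/2)] : Fin 2 → ℝ) j +
        ∑ i, (fun _ _ => (1:ℝ)) j i * F x i)) :=
    IsLayers.step l 2 1 F hF hm _ _
  have h2 : IsLayers relu m (l + 2) 1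
      (fun x j => relu ((fun _ => (0:ℝ)) j +
        ∑ i, (fun (_ : Fin 1) => (![2, -4] : Fin 2 → ℝ)) j i *
          (fun x j => relu ((![0, -(1/2)] : Fin 2 → ℝ) j +
            ∑ i, (fun _ _ => (1:ℝ)) j i * F x i)) x i)) :=
    IsLayers.step (l+1) 1 2 _ h1 (by omega) _ _
  refine ⟨_, h2, fun x => ?_⟩
  have hr : relu (F x 0) = relu (0 + ∑ i : Fin 1, 1 * F x i) := by
    simp
  simp only [Fin.sum_univ_two, Fin.sum_univ_one]
  unfold fml
  norm_num [Matrix.cons_val_zero, Matrix.cons_val_one, Matrix.head_cons]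
  ring_nf

lemma deep_net (k : ℕ) (hk : 1 ≤ k) :
    ∃ F : ℝ → Fin 1 → ℝ, IsLayers relu 2 (2 * k) 1 F ∧ ∀ x, F x 0 = fml^[k] x := by
  induction k with
  | zero => omega
  | succ k ih =>
      rcases Nat.eq_or_lt_of_le hk with h1 | h1
      · -- k + 1 = 1
        have hk0 : k = 0 := by omega
        subst hk0
        have h1 : IsLayers relu 2 1 2
            (fun x j => relu ((![0, -(1/2)] : Fin 2 → ℝ) j + (![1, 1] : Fin 2 → ℝ) j * x)) :=
          IsLayers.base 2 le_rfl _ _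
        have h2 : IsLayers relu 2 2 1
            (fun x j => relu ((fun _ => (0:ℝ)) j +
              ∑ i, (fun (_ : Fin 1) => (![2, -4] : Fin 2 → ℝ)) j i *
                (fun x j => relu ((![0, -(1/2)] : Fin 2 → ℝ) j +
                  (![1, 1] : Fin 2 → ℝ) j * x)) x i)) :=
          IsLayers.step 1 1 2 _ h1 (by omega) _ _
        refine ⟨_, h2, fun x => ?_⟩
        simp only [Fin.sum_univ_two, Function.iterate_one]
        unfold fml
        norm_num [Matrix.cons_val_zero, Matrix.cons_val_one, Matrix.head_cons]
        ring_nf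
      · obtain ⟨F, hF, hFv⟩ := ih (by omega)
        obtain ⟨G, hG, hGv⟩ := two_more_layers le_rfl F hF
        have : 2 * k + 2 = 2 * (k + 1) := by ring
        rw [this] at hG
        refine ⟨G, hG, fun x => ?_⟩
        rw [hGv, hFv, Function.iterate_succ_apply']
def AffOnE (g : ℝ → ℝ) (u v : EReal) : Prop :=
  ∃ c d : ℝ, ∀ x : ℝ, u ≤ (x : EReal) → (x : EReal) ≤ v → g x = c * x + d

def JS (t d : ℕ) (F : ℝ → Fin d → ℝ) : Prop :=
  ∃ b : ℕ → EReal, b 0 = ⊥ ∧ b t = ⊤ ∧ Monotone b ∧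
    ∀ (j : Fin d) (i : ℕ), i < t → AffOnE (fun x => F x j) (b i) (b (i + 1))

lemma JS.mono {t t' d : ℕ} {F : ℝ → Fin d → ℝ} (h : JS t d F) (ht : t ≤ t') : JS t' d F := by
  obtain ⟨b, hb0, hbt, hbm, hba⟩ := h
  refine ⟨b, hb0, top_le_iff.mp (hbt ▸ hbm ht), hbm, fun j i hi => ?_⟩
  by_cases hit : i < t
  · exact hba j i hit
  · refine ⟨0, 0, fun x hx _ => absurd (lt_of_lt_of_le (EReal.coe_lt_top x) ?_) (not_lt.mpr hx)⟩
    calc (⊤ : EReal) = b t := hbt.symm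
    _ ≤ b i := hbm (by omega)

lemma affOnE_comb {d : ℕ} {F : ℝ → Fin d → ℝ} {u v : EReal}
    (h : ∀ j, AffOnE (fun x => F x j) u v) (w : Fin d → ℝ) (β : ℝ) :
    AffOnE (fun x => β + ∑ i, w i * F x i) u v := by
  choose c dd hc using h
  refine ⟨∑ i, w i * c i, β + ∑ i, w i * dd i, fun x hu hv => ?_⟩
  show β + ∑ i, w i * F x i = _
  have hsum : ∑ i, w i * F x i = ∑ i, (w i * c i * x + w i * dd i) :=
    Finset.sum_congr rfl fun i _ => by
      rw [show F x i = c i * x + dd i from hc i x hu hv]; ring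
  rw [hsum, Finset.sum_add_distrib, ← Finset.sum_mul]
  ring

lemma sign_lemma {c dd : ℝ} {U V u v zc : EReal} (hU : U ≤ u) (hV : v ≤ V)
    (hzc : zc = max U (min V (((if c = 0 then (0:ℝ) else -dd/c) : ℝ) : EReal)))
    (hnot : ¬ (u < zc ∧ zc < v)) :
    (∀ x : ℝ, u ≤ (x:EReal) → (x:EReal) ≤ v → 0 ≤ c * x + dd) ∨
    (∀ x : ℝ, u ≤ (x:EReal) → (x:EReal) ≤ v → c * x + dd ≤ 0) := by
  set z : ℝ := if c = 0 then (0:ℝ) else -dd/c with hz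
  by_cases hc : c = 0
  · rcases le_total 0 dd with h | h
    · exact Or.inl fun x _ _ => by rw [hc]; linarith
    · exact Or.inr fun x _ _ => by rw [hc]; linarith
  · have hzval : c * z + dd = 0 := by
      rw [hz, if_neg hc]; field_simp; ring
    -- helper: all x on one side of z
    have sideR : (∀ x : ℝ, u ≤ (x:EReal) → (x:EReal) ≤ v → z ≤ x) →
        (∀ x : ℝ, u ≤ (x:EReal) → (x:EReal) ≤ v → 0 ≤ c * x + dd) ∨
        (∀ x : ℝ, u ≤ (x:EReal) → (x:EReal) ≤ v → c * x + dd ≤ 0) := by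
      intro hside
      rcases le_or_gt 0 c with hc0 | hc0
      · exact Or.inl fun x h1 h2 => by nlinarith [hside x h1 h2]
      · exact Or.inr fun x h1 h2 => by nlinarith [hside x h1 h2]
    have sideL : (∀ x : ℝ, u ≤ (x:EReal) → (x:EReal) ≤ v → x ≤ z) →
        (∀ x : ℝ, u ≤ (x:EReal) → (x:EReal) ≤ v → 0 ≤ c * x + dd) ∨
        (∀ x : ℝ, u ≤ (x:EReal) → (x:EReal) ≤ v → c * x + dd ≤ 0) := by
      intro hside
      rcases le_or_gt 0 c with hc0 | hc0
      · exact Or.inr fun x h1 h2 => by nlinarith [hside x h1 h2]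
      · exact Or.inl fun x h1 h2 => by nlinarith [hside x h1 h2]
    rcases not_and_or.mp hnot with h | h
    · -- zc ≤ u
      have hzcu : zc ≤ u := not_lt.mp h
      rcases le_or_gt ((z:ℝ):EReal) V with hzV | hzV
      · -- z ≤ V : zc = max U z ≥ z, so z ≤ u
        apply sideR
        intro x h1 h2
        have : ((z:ℝ):EReal) ≤ (x:EReal) := by
          calc ((z:ℝ):EReal) ≤ max U (min V ((z:ℝ):EReal)) := by
                rw [min_eq_right hzV]; exact le_max_right _ _
          _ = zc := hzc.symm
          _ ≤ u := hzcu
          _ ≤ (x:EReal) := h1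
        exact_mod_cast this
      · -- V < z : all x ≤ v ≤ V < z
        apply sideL
        intro x h1 h2
        have : (x:EReal) < ((z:ℝ):EReal) := lt_of_le_of_lt (h2.trans hV) hzV
        exact_mod_cast this.le
    · -- v ≤ zc
      have hvzc : v ≤ zc := not_lt.mp h
      rcases le_or_gt (min V ((z:ℝ):EReal)) U with hm | hm
      · -- zc = U, so v ≤ U ≤ u : interval degenerate
        have hvu : v ≤ u := by
          calc v ≤ zc := hvzc
          _ = U := by rw [hzc, max_eq_left hm]
          _ ≤ u := hU
        by_cases hex : ∃ x : ℝ, u ≤ (x:EReal) ∧ (x:EReal) ≤ v ∧ c * x + dd < 0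
        · obtain ⟨x0, hx0u, hx0v, hx0⟩ := hex
          refine Or.inr fun x h1 h2 => ?_
          have hxx0 : (x:EReal) = (x0:EReal) :=
            le_antisymm (h2.trans (hvu.trans hx0u)) (hx0v.trans (hvu.trans h1))
          have : x = x0 := by exact_mod_cast hxx0
          rw [this]; exact hx0.le
        · push_neg at hex
          exact Or.inl fun x h1 h2 => hex x h1 h2
      · -- zc = min V z ≤ z, so all x ≤ v ≤ zc ≤ z
        apply sideL
        intro x h1 h2
        have : (x:EReal) ≤ ((z:ℝ):EReal) := by
          calc (x:EReal) ≤ v := h2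
          _ ≤ zc := hvzc
          _ = min V ((z:ℝ):EReal) := by rw [hzc, max_eq_right hm.le]
          _ ≤ ((z:ℝ):EReal) := min_le_right _ _
        exact_mod_cast this

lemma divmod_lt {d n : ℕ} (h : n % (d+1) < d) :
    (n+1) / (d+1) = n / (d+1) ∧ (n+1) % (d+1) = n % (d+1) + 1 := by
  have key := Nat.div_add_mod n (d+1)
  have h1 : n + 1 = (n % (d+1) + 1) + (d+1) * (n / (d+1)) := by omega
  constructor
  · rw [h1, Nat.add_mul_div_left _ _ (Nat.succ_pos d), Nat.div_eq_of_lt (by omega)]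
    omega
  · rw [h1, Nat.add_mul_mod_self_left, Nat.mod_eq_of_lt (by omega)]

lemma divmod_eq {d n : ℕ} (h : n % (d+1) = d) :
    (n+1) / (d+1) = n / (d+1) + 1 ∧ (n+1) % (d+1) = 0 := by
  have key := Nat.div_add_mod n (d+1)
  have hmul : (d+1) * (n / (d+1) + 1) = (d+1) * (n / (d+1)) + (d+1) := by ring
  have h1 : n + 1 = (d+1) * (n / (d+1) + 1) := by omega
  exact ⟨by rw [h1, Nat.mul_div_cancel_left _ (Nat.succ_pos d)],
    by rw [h1, Nat.mul_mod_right]⟩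

lemma JS.step {t d d' : ℕ} {F : ℝ → Fin d' → ℝ} (hF : JS t d' F)
    (w : Fin d → Fin d' → ℝ) (β : Fin d → ℝ) :
    JS (t * (d + 1)) d (fun x j => relu (β j + ∑ i, w j i * F x i)) := by
  obtain ⟨b, hb0, hbt, hbm, hba⟩ := hF
  have Hrep : ∀ (j : Fin d) (i : ℕ), ∃ c dd : ℝ, ∀ x : ℝ,
      b i ≤ (x:EReal) → (x:EReal) ≤ b (i+1) →
      (i < t → β j + ∑ i', w j i' * F x i' = c * x + dd) := by
    intro j i
    by_cases hi : i < t
    · obtain ⟨c, dd, hcd⟩ := affOnE_comb (fun j' => hba j' i hi) (w j) (β j)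
      exact ⟨c, dd, fun x h1 h2 _ => hcd x h1 h2⟩
    · exact ⟨0, 0, fun x _ _ h' => absurd h' hi⟩
  choose C D hCD using Hrep
  set z : Fin d → ℕ → ℝ := fun j i => if C j i = 0 then (0:ℝ) else -D j i/C j i with hzdef
  set zc : Fin d → ℕ → EReal :=
    fun j i => max (b i) (min (b (i+1)) ((z j i : ℝ) : EReal)) with hzcdef
  set s : ℕ → Fin d → EReal :=
    fun i => (fun j => zc j i) ∘ (Tuple.sort (fun j => zc j i)) with hsdef
  have hsmono : ∀ i, Monotone (s i) := fun i => Tuple.monotone_sort _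
  have hsmem : ∀ (i : ℕ) (j : Fin d), ∃ r : Fin d, s i r = zc j i := by
    intro i j
    refine ⟨(Tuple.sort (fun j => zc j i))⁻¹ j, ?_⟩
    simp [hsdef, Function.comp]
  have hs_lb : ∀ (i : ℕ) (r : Fin d), b i ≤ s i r := fun i r => le_max_left _ _
  have hs_ub : ∀ (i : ℕ) (r : Fin d), s i r ≤ b (i+1) := fun i r =>
    max_le (hbm (Nat.le_succ i)) (min_le_left _ _)
  set b2 : ℕ → EReal := fun n =>
    if _h : n % (d+1) = 0 then b (n / (d+1))
    else s (n / (d+1)) ⟨n % (d+1) - 1, by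
      have : n % (d+1) < d + 1 := Nat.mod_lt n (by omega)
      omega⟩
    with hb2def
  have b2_mod0 : ∀ n, n % (d+1) = 0 → b2 n = b (n/(d+1)) := by
    intro n h; rw [hb2def]; exact dif_pos h
  have b2_modpos : ∀ n (h : n % (d+1) ≠ 0) (hlt : n % (d+1) - 1 < d),
      b2 n = s (n/(d+1)) ⟨n % (d+1) - 1, hlt⟩ := by
    intro n h hlt; rw [hb2def]; exact dif_neg h
  have hb20 : b2 0 = ⊥ := by
    rw [b2_mod0 0 (by simp), Nat.zero_div, hb0]
  have hb2t : b2 (t * (d+1)) = ⊤ := by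
    rw [b2_mod0 _ (Nat.mul_mod_left t (d+1)), Nat.mul_div_cancel _ (Nat.succ_pos d), hbt]
  have hb2mono : Monotone b2 := by
    apply monotone_nat_of_le_succ
    intro n
    have hmlt : n % (d+1) < d + 1 := Nat.mod_lt n (by omega)
    rcases Nat.lt_or_ge (n % (d+1)) d with hr | hr
    · obtain ⟨hdiv, hmod⟩ := divmod_lt hr
      have hmodpos1 : (n+1) % (d+1) ≠ 0 := by omega
      have hlt1 : (n+1) % (d+1) - 1 < d := by omega
      rw [b2_modpos (n+1) hmodpos1 hlt1]
      rcases Nat.eq_zero_or_pos (n % (d+1)) with h0 | h0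
      · rw [b2_mod0 n h0, hdiv]
        exact hs_lb _ _
      · have hlt0 : n % (d+1) - 1 < d := by omega
        rw [b2_modpos n (by omega) hlt0, hdiv]
        apply hsmono
        simp only [Fin.mk_le_mk]
        omega
    · have hrd : n % (d+1) = d := by omega
      obtain ⟨hdiv, hmod⟩ := divmod_eq hrd
      rw [b2_mod0 (n+1) hmod, hdiv]
      rcases Nat.eq_zero_or_pos d with hd0 | hd0
      · rw [b2_mod0 n (by omega)]
        exact hbm (Nat.le_succ _)
      · have hlt0 : n % (d+1) - 1 < d := by omega
        rw [b2_modpos n (by omega) hlt0]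
        exact hs_ub _ _
  refine ⟨b2, hb20, hb2t, hb2mono, ?_⟩
  intro j n hn
  have hd0 : 0 < d := j.pos
  set i := n / (d+1) with hidef
  set r := n % (d+1) with hrdef
  have hrlt : r < d + 1 := Nat.mod_lt n (by omega)
  have hi : i < t := (Nat.div_lt_iff_lt_mul (by omega)).mpr hn
  have hlow : b i ≤ b2 n := by
    rcases Nat.eq_zero_or_pos r with h0 | h0
    · rw [b2_mod0 n h0]
    · rw [b2_modpos n (by omega) (by omega)]
      exact hs_lb _ _
  have hhigh : b2 (n+1) ≤ b (i+1) := by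
    rcases Nat.lt_or_ge r d with hrd | hrd
    · obtain ⟨hdiv, hmod⟩ := divmod_lt hrd
      rw [b2_modpos (n+1) (by omega) (by omega), hdiv]
      exact hs_ub _ _
    · have hrd' : r = d := by omega
      obtain ⟨hdiv, hmod⟩ := divmod_eq hrd'
      rw [b2_mod0 (n+1) hmod, hdiv]
  have hnot : ¬ (b2 n < zc j i ∧ zc j i < b2 (n+1)) := by
    obtain ⟨r0, hr0⟩ := hsmem i j
    rintro ⟨h1, h2⟩
    rcases Nat.eq_zero_or_pos r with h0 | h0
    · -- b2 (n+1) = s i 0 ≤ s i r0 = zc j i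
      obtain ⟨hdiv, hmod⟩ := divmod_lt (by omega : n % (d+1) < d)
      rw [b2_modpos (n+1) (by omega) (by omega), hdiv] at h2
      have : s i ⟨(n+1) % (d+1) - 1, by omega⟩ ≤ s i r0 := by
        apply hsmono; simp [Fin.le_def]; omega
      rw [hr0] at this
      exact absurd h2 (not_lt.mpr this)
    · have hb2n : b2 n = s i ⟨r - 1, by omega⟩ := b2_modpos n (by omega) (by omega)
      rcases le_or_gt r0.val (r - 1) with hle | hgt
      · have : s i r0 ≤ s i ⟨r - 1, by omega⟩ := by
          apply hsmono; simp only [Fin.le_def]; omega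
        rw [hr0] at this
        rw [hb2n] at h1
        exact absurd h1 (not_lt.mpr this)
      · rcases Nat.lt_or_ge r d with hrd | hrd
        · obtain ⟨hdiv, hmod⟩ := divmod_lt hrd
          rw [b2_modpos (n+1) (by omega) (by omega), hdiv] at h2
          have : s i ⟨(n+1) % (d+1) - 1, by omega⟩ ≤ s i r0 := by
            apply hsmono; simp [Fin.le_def]; omega
          rw [hr0] at this
          exact absurd h2 (not_lt.mpr this)
        · have : r0.val < d := r0.2
          omega
  have hrep : ∀ x : ℝ, b2 n ≤ (x:EReal) → (x:EReal) ≤ b2 (n+1) →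
      β j + ∑ i', w j i' * F x i' = C j i * x + D j i :=
    fun x h1 h2 => hCD j i x (le_trans hlow h1) (le_trans h2 hhigh) hi
  have hsign := sign_lemma (c := C j i) (dd := D j i) hlow hhigh
    (zc := zc j i) rfl hnot
  show AffOnE (fun x => relu (β j + ∑ i', w j i' * F x i')) (b2 n) (b2 (n+1))
  rcases hsign with hpos | hneg
  · refine ⟨C j i, D j i, fun x h1 h2 => ?_⟩
    show relu (β j + ∑ i', w j i' * F x i') = C j i * x + D j i
    rw [hrep x h1 h2]
    exact relu_of_nonneg (hpos x h1 h2)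
  · refine ⟨0, 0, fun x h1 h2 => ?_⟩
    show relu (β j + ∑ i', w j i' * F x i') = 0 * x + 0
    rw [hrep x h1 h2, relu_of_nonpos (hneg x h1 h2)]
    ring

lemma js_id : JS 1 1 (fun x (_ : Fin 1) => x) := by
  refine ⟨fun n => if n = 0 then ⊥ else ⊤, by simp, by simp, ?_, ?_⟩
  · intro a b hab
    by_cases ha : a = 0
    · simp [ha]
    · have hb : b ≠ 0 := by omega
      simp [ha, hb]
  · intro j i hi
    exact ⟨1, 0, fun x _ _ => by ring⟩


lemma isLayers_js {m l d : ℕ} {F : ℝ → Fin d → ℝ} (h : IsLayers relu m l d F) :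
    JS ((m+1)^l) d F := by
  induction h with
  | base d hd w b =>
      have h1 := js_id.step (fun j (_ : Fin 1) => w j) b
      have heq : (fun x (j : Fin d) => relu (b j + ∑ i : Fin 1,
          (fun j (_ : Fin 1) => w j) j i * (fun x (_ : Fin 1) => x) x i)) =
          fun x j => relu (b j + w j * x) := by
        funext x j
        simp
      rw [heq] at h1
      exact h1.mono (by simpa using Nat.succ_le_succ hd)
  | step l d d' F hF hd w b ih =>
      have h1 := ih.step w b
      refine h1.mono ?_
      rw [pow_succ]
      exact Nat.mul_le_mul_left _ (Nat.succ_le_succ hd)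
attribute [local instance] Classical.propDecidable

lemma shallow_err (k t : ℕ) (hk : 4 ≤ k) (ht1 : 1 ≤ t) (ht : t ≤ 2^(k-3)) (g : ℝ → ℝ)
    (b : ℕ → EReal) (hb0 : b 0 = ⊥) (hbt : b t = ⊤) (hbm : Monotone b)
    (hba : ∀ i < t, AffOnE g (b i) (b (i+1))) :
    1/6 ≤ clsErr (2^k) (apX (2^k)) (apY (2^k)) g := by
  set n := 2^k with hn
  have hnpos : 0 < n := Nat.pow_pos (by norm_num)
  have hnR : (0:ℝ) < n := by exact_mod_cast hnpos
  set Xn : ℕ → ℝ := fun i => (i:ℝ)/n with hXn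
  set cn : ℕ → ℕ := fun i => cls g (Xn i) with hcn
  have hXmono : Monotone Xn := fun i j hij => by
    have h1 : (i:ℝ) ≤ (j:ℝ) := Nat.cast_le.mpr hij
    have h2 : (0:ℝ) ≤ (i:ℝ) := Nat.cast_nonneg i
    show (i:ℝ)/n ≤ (j:ℝ)/n
    gcongr

  set pn : ℕ → ℕ := fun i => Nat.findGreatest (fun q => b q ≤ ((Xn i : ℝ) : EReal)) t with hpn
  have hp_le : ∀ i, pn i ≤ t := fun i => Nat.findGreatest_le t
  have hp_spec : ∀ i, b (pn i) ≤ ((Xn i : ℝ) : EReal) := by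
    intro i
    exact Nat.findGreatest_spec (P := fun q => b q ≤ ((Xn i : ℝ) : EReal))
      (Nat.zero_le t) (by show b 0 ≤ _; rw [hb0]; exact bot_le)
  have hp_lt : ∀ i, pn i < t := by
    intro i
    rcases Nat.lt_or_ge (pn i) t with h | h
    · exact h
    · have hpt : pn i = t := le_antisymm (hp_le i) h
      have := hp_spec i
      rw [hpt, hbt] at this
      exact absurd (lt_of_le_of_lt this (EReal.coe_lt_top _)) (lt_irrefl _)
  have hp_ub : ∀ i, ((Xn i : ℝ) : EReal) ≤ b (pn i + 1) := by
    intro i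
    by_contra hcon
    have h1 : b (pn i + 1) ≤ ((Xn i : ℝ) : EReal) := (not_le.mp hcon).le
    have h2 : pn i + 1 ≤ pn i := Nat.le_findGreatest (hp_lt i) h1
    omega
  have hp_mono : Monotone pn := by
    intro i j hij
    exact Nat.le_findGreatest (hp_le i)
      (le_trans (hp_spec i) (EReal.coe_le_coe_iff.mpr (hXmono hij)))
  set Chg := (Finset.range (n-1)).filter (fun i => ¬ (cn i = cn (i+1))) with hChg
  set NC := (Finset.range (n-1)).filter (fun i => cn i = cn (i+1)) with hNC
  have hcard : NC.card + Chg.card = n - 1 := by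
    rw [hNC, hChg, Finset.card_filter_add_card_filter_not, Finset.card_range]
  -- bound on the number of sign changes
  have hChgBound : Chg.card ≤ t * 2 := by
    set φ : ℕ → ℕ × Bool := fun i => if pn i = pn (i+1) then (pn i, true) else (pn (i+1), false)
      with hφ
    have hmaps : ∀ i ∈ Chg, φ i ∈ (Finset.range t) ×ˢ (Finset.univ : Finset Bool) := by
      intro i _
      rw [Finset.mem_product]
      refine ⟨?_, Finset.mem_univ _⟩
      rw [hφ]
      by_cases h : pn i = pn (i+1) <;> simp [h, Finset.mem_range, hp_lt]
    have hinj2 : ∀ i i', i ∈ Chg → i' ∈ Chg → i < i' → φ i ≠ φ i' := by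
      intro i i' hi hi' hlt heq
      have hchg_i : cn i ≠ cn (i+1) := by
        have := Finset.mem_filter.mp hi; exact this.2
      have hchg_i' : cn i' ≠ cn (i'+1) := by
        have := Finset.mem_filter.mp hi'; exact this.2
      by_cases h1 : pn i = pn (i+1) <;> by_cases h2 : pn i' = pn (i'+1)
      · -- both within-piece changes in the same piece
        rw [hφ] at heq
        simp only [if_pos h1, if_pos h2] at heq
        have hq : pn i = pn i' := (Prod.ext_iff.mp heq).1
        set q := pn i with hqdef
        have hq_lt : q < t := hp_lt i
        have hblock : ∀ j, i ≤ j → j ≤ i'+1 → pn j = q := by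
          intro j hj1 hj2
          have a1 : q ≤ pn j := by rw [hqdef]; exact hp_mono hj1
          have a2 : pn j ≤ q := by
            have : pn j ≤ pn (i'+1) := hp_mono hj2
            rw [← h2, ← hq] at this
            exact this
          omega
        obtain ⟨cq, dq, hqrep⟩ := hba q hq_lt
        have hval : ∀ j, i ≤ j → j ≤ i'+1 → cn j = (if 1/2 ≤ cq * Xn j + dq then 1 else 0) := by
          intro j hj1 hj2
          have hpj := hblock j hj1 hj2
          have e1 : b q ≤ ((Xn j : ℝ) : EReal) := by rw [← hpj]; exact hp_spec j
          have e2 : ((Xn j : ℝ) : EReal) ≤ b (q+1) := by rw [← hpj]; exact hp_ub j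
          rw [hcn]
          simp only [cls, hqrep (Xn j) e1 e2]
        have hii' : i + 1 ≤ i' := by omega
        rcases le_or_gt 0 cq with hc | hc
        · have hQmono : ∀ j j', i ≤ j → j ≤ j' → j' ≤ i'+1 →
              (1/2 ≤ cq * Xn j + dq) → (1/2 ≤ cq * Xn j' + dq) := by
            intro j j' a1 a2 a3 hQ
            have := mul_le_mul_of_nonneg_left (hXmono a2) hc
            linarith
          by_cases hQi : 1/2 ≤ cq * Xn i + dq
          · have hQi1 : 1/2 ≤ cq * Xn (i+1) + dq := hQmono i (i+1) le_rfl (by omega) (by omega) hQi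
            rw [hval i le_rfl (by omega), hval (i+1) (by omega) (by omega),
              if_pos hQi, if_pos hQi1] at hchg_i
            exact hchg_i rfl
          · have hQi1 : 1/2 ≤ cq * Xn (i+1) + dq := by
              by_contra hcon
              rw [hval i le_rfl (by omega), hval (i+1) (by omega) (by omega),
                if_neg hQi, if_neg hcon] at hchg_i
              exact hchg_i rfl
            have hQ1 : 1/2 ≤ cq * Xn i' + dq := hQmono (i+1) i' (by omega) hii' (by omega) hQi1
            have hQ2 : 1/2 ≤ cq * Xn (i'+1) + dq := hQmono (i+1) (i'+1) (by omega) (by omega) le_rfl hQi1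
            rw [hval i' (by omega) (by omega), hval (i'+1) (by omega) le_rfl,
              if_pos hQ1, if_pos hQ2] at hchg_i'
            exact hchg_i' rfl
        · have hQanti : ∀ j j', i ≤ j → j ≤ j' → j' ≤ i'+1 →
              (1/2 ≤ cq * Xn j' + dq) → (1/2 ≤ cq * Xn j + dq) := by
            intro j j' a1 a2 a3 hQ
            have := mul_le_mul_of_nonpos_left (hXmono a2) hc.le
            linarith
          by_cases hQi1 : 1/2 ≤ cq * Xn (i+1) + dq
          · have hQi : 1/2 ≤ cq * Xn i + dq := hQanti i (i+1) le_rfl (by omega) (by omega) hQi1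
            rw [hval i le_rfl (by omega), hval (i+1) (by omega) (by omega),
              if_pos hQi, if_pos hQi1] at hchg_i
            exact hchg_i rfl
          · have hQi' : ¬ (1/2 ≤ cq * Xn i' + dq) := fun hcon =>
              hQi1 (hQanti (i+1) i' (by omega) hii' (by omega) hcon)
            have hQi'1 : ¬ (1/2 ≤ cq * Xn (i'+1) + dq) := fun hcon =>
              hQi1 (hQanti (i+1) (i'+1) (by omega) (by omega) le_rfl hcon)
            rw [hval i' (by omega) (by omega), hval (i'+1) (by omega) le_rfl,
              if_neg hQi', if_neg hQi'1] at hchg_i'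
            exact hchg_i' rfl
      · rw [hφ] at heq
        simp only [if_pos h1, if_neg h2] at heq
        exact absurd (Prod.ext_iff.mp heq).2 (by simp)
      · rw [hφ] at heq
        simp only [if_neg h1, if_pos h2] at heq
        exact absurd (Prod.ext_iff.mp heq).2 (by simp)
      · rw [hφ] at heq
        simp only [if_neg h1, if_neg h2] at heq
        have hq : pn (i+1) = pn (i'+1) := (Prod.ext_iff.mp heq).1
        have a1 : pn (i+1) ≤ pn i' := hp_mono (by omega)
        have a2 : pn i' ≤ pn (i'+1) := hp_mono (by omega)
        exact h2 (by omega)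
    have hinj : Set.InjOn φ Chg := by
      intro a ha b hb heq
      rcases lt_trichotomy a b with h | h | h
      · exact absurd heq (hinj2 a b ha hb h)
      · exact h
      · exact absurd heq.symm (hinj2 b a hb ha h)
    calc Chg.card ≤ ((Finset.range t) ×ˢ (Finset.univ : Finset Bool)).card :=
          Finset.card_le_card_of_injOn φ hmaps hinj
    _ = t * 2 := by rw [Finset.card_product, Finset.card_range, Finset.card_univ,
          Fintype.card_bool]
  -- error set
  set E := (Finset.univ : Finset (Fin n)).filter
      (fun i => ¬ (cls g (apX n i) = apY n i)) with hE
  set ψ : ℕ → Fin n := fun i =>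
    if h : i + 1 < n then (if cn i ≠ i % 2 then (⟨i, by omega⟩ : Fin n) else ⟨i+1, h⟩)
    else ⟨0, hnpos⟩ with hψ
  have hmapsE : ∀ i ∈ NC, ψ i ∈ E := by
    intro i hi
    obtain ⟨hir, hieq⟩ := Finset.mem_filter.mp hi
    rw [Finset.mem_range] at hir
    have h1 : i + 1 < n := by omega
    rw [hψ]
    simp only [dif_pos h1]
    by_cases hx : cn i ≠ i % 2
    · rw [if_pos hx]
      rw [hE, Finset.mem_filter]
      refine ⟨Finset.mem_univ _, ?_⟩
      show ¬ (cls g (apX n ⟨i, by omega⟩) = apY n ⟨i, by omega⟩)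
      have e1 : apX n ⟨i, by omega⟩ = Xn i := rfl
      have e2 : apY n ⟨i, by omega⟩ = i % 2 := rfl
      rw [e1, e2]
      exact hx
    · rw [if_neg hx]
      rw [not_not] at hx
      rw [hE, Finset.mem_filter]
      refine ⟨Finset.mem_univ _, ?_⟩
      show ¬ (cls g (apX n ⟨i+1, h1⟩) = apY n ⟨i+1, h1⟩)
      have e1 : apX n ⟨i+1, h1⟩ = Xn (i+1) := rfl
      have e2 : apY n ⟨i+1, h1⟩ = (i+1) % 2 := rfl
      rw [e1, e2]
      show ¬ (cn (i+1) = (i+1) % 2)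
      rw [← hieq, hx]
      omega
  have hfib : ∀ e ∈ E, (NC.filter (fun i => ψ i = e)).card ≤ 2 := by
    intro e _
    have hsub : NC.filter (fun i => ψ i = e) ⊆ {(e : Fin n).val, (e : Fin n).val - 1} := by
      intro a ha
      obtain ⟨ha1, ha2⟩ := Finset.mem_filter.mp ha
      obtain ⟨har, _⟩ := Finset.mem_filter.mp ha1
      rw [Finset.mem_range] at har
      have h1 : a + 1 < n := by omega
      rw [hψ] at ha2
      simp only [dif_pos h1] at ha2
      by_cases hx : cn a ≠ a % 2
      · rw [if_pos hx] at ha2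
        have : a = (e : Fin n).val := by rw [← ha2]
        simp [Finset.mem_insert, this]
      · rw [if_neg hx] at ha2
        have : a + 1 = (e : Fin n).val := by rw [← ha2]
        simp only [Finset.mem_insert, Finset.mem_singleton]
        omega
    calc (NC.filter (fun i => ψ i = e)).card
        ≤ ({(e : Fin n).val, (e : Fin n).val - 1} : Finset ℕ).card := Finset.card_le_card hsub
    _ ≤ 2 := (Finset.card_insert_le _ _).trans (by simp)
  have hNCE : NC.card ≤ 2 * E.card :=
    Finset.card_le_mul_card_image_of_maps_to hmapsE 2 hfib
  have he1 : 1 ≤ 2^(k-3) := Nat.one_le_two_pow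
  have h8 : 2^(k-3) * 8 = n := by
    rw [hn, show (8:ℕ) = 2^3 from rfl, ← pow_add]
    congr 1
    omega
  have hkey : n ≤ 6 * E.card := by omega
  have hsum : ∑ i : Fin n, (if cls g (apX n i) = apY n i then (0:ℝ) else 1) = E.card := by
    rw [Finset.sum_ite, Finset.sum_const_zero, Finset.sum_const, zero_add, nsmul_eq_mul,
      mul_one, hE]
  show (1:ℝ)/6 ≤ (n:ℝ)⁻¹ * ∑ i : Fin n, (if cls g (apX n i) = apY n i then (0:ℝ) else 1)
  rw [hsum]
  have hcast : (n:ℝ) ≤ 6 * (E.card : ℝ) := by exact_mod_cast hkey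
  have heq : (n:ℝ)⁻¹ * (E.card:ℝ) = (E.card:ℝ)/n := by ring
  rw [heq, le_div_iff₀ hnR]
  linarith


/-- on some set of `2^k` labeled points in `[0,1]` with binary labels,
a ReLU network with `2` nodes per layer and `2k` layers achieves zero classification
error, while every ReLU network with `l` layers of at most `m ≤ 2^((k-3)/l - 1)` nodes
has classification error at least `1/6`. -/
theorem deep_vs_shallow (k l m : ℕ) (hk : 0 < k) (hl : 0 < l) (hm : 0 < m)
    (hml : (m : ℝ) ≤ (2 : ℝ) ^ (((k : ℝ) - 3) / (l : ℝ) - 1)) :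
    ∃ (x : Fin (2 ^ k) → ℝ) (y : Fin (2 ^ k) → ℕ),
      (∀ i, x i ∈ Set.Icc (0 : ℝ) 1) ∧ (∀ i, y i = 0 ∨ y i = 1) ∧
      (∃ f ∈ NN relu 2 (2 * k), clsErr (2 ^ k) x y f = 0) ∧
      (∀ g ∈ NN relu m l, 1 / 6 ≤ clsErr (2 ^ k) x y g) := by
  have hlR : (0:ℝ) < l := by exact_mod_cast hl
  have hm1 : (1:ℝ) ≤ m := by exact_mod_cast hm
  -- exponent nonneg, so k ≥ l + 3 ≥ 4
  have hexp : 0 ≤ ((k:ℝ) - 3) / (l:ℝ) - 1 := by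
    by_contra hcon
    push_neg at hcon
    have := Real.rpow_lt_one_of_one_lt_of_neg (by norm_num : (1:ℝ) < 2) hcon
    linarith
  have hkl : (l:ℝ) ≤ (k:ℝ) - 3 := by
    have h1 : 1 ≤ ((k:ℝ) - 3) / (l:ℝ) := by linarith
    calc (l:ℝ) = 1 * l := by ring
    _ ≤ (((k:ℝ) - 3) / (l:ℝ)) * l := by
        apply mul_le_mul_of_nonneg_right h1 hlR.le
    _ = (k:ℝ) - 3 := by field_simp
  have hk4 : 4 ≤ k := by
    have hl1 : (1:ℝ) ≤ l := by exact_mod_cast hl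
    have : (4:ℝ) ≤ (k:ℝ) := by linarith
    exact_mod_cast this
  -- the shallow piece-count bound
  have hTbound : (m + 1)^l ≤ 2^(k-3) := by
    have h2m : (m:ℝ) + 1 ≤ (2:ℝ) ^ (((k:ℝ) - 3) / (l:ℝ)) := by
      have e1 : (2:ℝ) ^ (((k:ℝ) - 3) / (l:ℝ)) =
          2 * (2:ℝ) ^ (((k:ℝ) - 3) / (l:ℝ) - 1) := by
        have e2 := Real.rpow_add (by norm_num : (0:ℝ) < 2) 1 (((k:ℝ) - 3) / (l:ℝ) - 1)
        rw [Real.rpow_one] at e2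
        calc (2:ℝ) ^ (((k:ℝ) - 3) / (l:ℝ))
            = (2:ℝ) ^ (1 + (((k:ℝ) - 3) / (l:ℝ) - 1)) := by congr 1; ring
        _ = 2 * (2:ℝ) ^ (((k:ℝ) - 3) / (l:ℝ) - 1) := e2
      rw [e1]
      linarith
    have h2 : ((m:ℝ) + 1)^l ≤ ((2:ℝ) ^ (((k:ℝ) - 3) / (l:ℝ)))^l :=
      pow_le_pow_left₀ (by positivity) h2m l
    have h3 : ((2:ℝ) ^ (((k:ℝ) - 3) / (l:ℝ)))^l = (2:ℝ) ^ ((k:ℝ) - 3) := by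
      rw [← Real.rpow_natCast ((2:ℝ) ^ (((k:ℝ) - 3) / (l:ℝ))) l,
        ← Real.rpow_mul (by norm_num : (0:ℝ) ≤ 2)]
      congr 1
      field_simp
    have h4 : (2:ℝ) ^ ((k:ℝ) - 3) = ((2^(k-3) : ℕ) : ℝ) := by
      have : (k:ℝ) - 3 = ((k - 3 : ℕ) : ℝ) := by
        rw [Nat.cast_sub (by omega)]
        norm_num
      rw [this, Real.rpow_natCast]
      push_cast
      ring
    have h5 : (((m+1)^l : ℕ) : ℝ) ≤ ((2^(k-3) : ℕ) : ℝ) := by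
      push_cast
      calc ((m:ℝ) + 1)^l ≤ _ := h2
      _ = _ := h3
      _ = _ := h4.trans (by push_cast; ring)
    exact_mod_cast h5
  refine ⟨apX (2^k), apY (2^k), ?_, ?_, ?_, ?_⟩
  · intro i
    constructor
    · exact div_nonneg (Nat.cast_nonneg _) (Nat.cast_nonneg _)
    · apply div_le_one_of_le₀
      · exact_mod_cast i.2.le
      · exact Nat.cast_nonneg _
  · intro i
    unfold apY
    omega
  · -- the deep network
    obtain ⟨F, hF, hFv⟩ := deep_net k hk
    refine ⟨fun x => F x 0, ⟨F, hF, fun x => rfl⟩, ?_⟩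
    have hterm : ∀ i : Fin (2^k),
        (if cls (fun x => F x 0) (apX (2^k) i) = apY (2^k) i then (0:ℝ) else 1) = 0 := by
      intro i
      have hXv : apX (2^k) i = ((i:ℕ):ℝ) / 2^k := by
        unfold apX
        push_cast
        ring
      have hval : F (apX (2^k) i) 0 = (((i:ℕ) % 2 : ℕ) : ℝ) := by
        rw [hFv, hXv]
        exact fml_iter k (i:ℕ) i.2.le
      have hclsv : cls (fun x => F x 0) (apX (2^k) i) = (i:ℕ) % 2 := by
        unfold cls
        show (if (1:ℝ)/2 ≤ F (apX (2^k) i) 0 then 1 else 0) = (i:ℕ) % 2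
        rw [hval]
        rcases Nat.mod_two_eq_zero_or_one (i:ℕ) with h | h <;> rw [h] <;> norm_num
      rw [if_pos]
      exact hclsv
    unfold clsErr
    rw [Finset.sum_congr rfl (fun i _ => hterm i), Finset.sum_const_zero, mul_zero]
  · -- every shallow network errs
    intro g hg
    obtain ⟨F, hF, hgF⟩ := hg
    have hJS := isLayers_js hF
    obtain ⟨b, hb0, hbt, hbm, hba⟩ := hJS
    have hba' : ∀ i < (m+1)^l, AffOnE g (b i) (b (i+1)) := by
      intro i hi
      obtain ⟨c, dd, hc⟩ := hba 0 i hi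
      exact ⟨c, dd, fun x h1 h2 => by rw [hgF x]; exact hc x h1 h2⟩
    have := shallow_err k ((m+1)^l) hk4 (Nat.one_le_two_pow.trans
      (Nat.pow_le_pow_left (by omega) l) |>.trans le_rfl) hTbound g b hb0 hbt hbm hba'
    exact this
end
end

section
/- Let k, l, m be positive integers, let σ : ℝ → ℝ be t-sawtooth, and let n := 2^k. On the n-ap dataset: (1) some f ∈ ℜ(σ_R; 2, 2; k) (a recurrent ReLU network with 2 layers of at most 2 nodes, iterated k times) achieves classification error R_z(f) = 0, and (2) every g ∈ 𝔑(σ; m, l) has classification error R_z(g) ≥ (n − 4(tm)^l)/(3n). -/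
noncomputable section

open Finset in
/-- `f` is affine on every interval avoiding the finite set `S`. -/
def AffOff (S : Finset ℝ) (f : ℝ → ℝ) : Prop :=
  ∀ a b : EReal, (∀ s ∈ S, (s : EReal) ≤ a ∨ b ≤ (s : EReal)) →
    ∃ c d : ℝ, ∀ x : ℝ, a < (x : EReal) → (x : EReal) < b → f x = c * x + d

lemma affOff_mono {S S' : Finset ℝ} {f : ℝ → ℝ} (hs : S ⊆ S') (h : AffOff S f) : AffOff S' f :=
  fun a b hab => h a b (fun s hs' => hab s (hs hs'))

lemma affOff_congr {S : Finset ℝ} {f g : ℝ → ℝ} (h : AffOff S f) (hfg : ∀ x, g x = f x) :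
    AffOff S g := by
  intro a b hab
  obtain ⟨c, d, hcd⟩ := h a b hab
  exact ⟨c, d, fun x hx hx' => by rw [hfg]; exact hcd x hx hx'⟩

lemma affOff_inner {S : Finset ℝ} {d' : ℕ} {F : ℝ → Fin d' → ℝ}
    (hF : ∀ i, AffOff S (fun x => F x i)) (b : ℝ) (w : Fin d' → ℝ) :
    AffOff S (fun x => b + ∑ i, w i * F x i) := by
  intro a a' hab
  have h := fun i => hF i a a' hab
  choose c e hce using h
  refine ⟨∑ i, w i * c i, b + ∑ i, w i * e i, fun x hx hx' => ?_⟩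
  have : ∀ i ∈ Finset.univ, w i * F x i = w i * c i * x + w i * e i := by
    intro i _
    rw [show F x i = c i * x + e i from hce i x hx hx']; ring
  show b + ∑ i, w i * F x i = _
  rw [Finset.sum_congr rfl this, Finset.sum_add_distrib, ← Finset.sum_mul]
  ring

/-- Lower endpoint of the gap indexed by `o`. -/
def olo (o : Option ℝ) : EReal := o.elim ⊥ (fun s => (s : EReal))

/-- Next breakpoint of `S` after `olo o` (upper endpoint of the gap). -/
noncomputable def onx (S : Finset ℝ) (o : Option ℝ) : EReal := by
  classical
  exact if h : (S.filter (fun s : ℝ => olo o < (s : EReal))).Nonempty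
    then (((S.filter (fun s : ℝ => olo o < (s : EReal))).min' h : ℝ) : EReal) else ⊤

/-- The index of the gap of `S` containing `y`. -/
noncomputable def gapIdx (S : Finset ℝ) (y : ℝ) : Option ℝ := by
  classical
  exact if h : (S.filter (fun s : ℝ => s ≤ y)).Nonempty
    then some ((S.filter (fun s : ℝ => s ≤ y)).max' h) else none

lemma onx_avoid (S : Finset ℝ) (o : Option ℝ) :
    ∀ s ∈ S, (s : EReal) ≤ olo o ∨ onx S o ≤ (s : EReal) := by
  classical
  intro s hs
  by_cases h1 : (s : EReal) ≤ olo o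
  · exact Or.inl h1
  · right
    push_neg at h1
    have hmem : s ∈ S.filter (fun s : ℝ => olo o < (s : EReal)) := Finset.mem_filter.mpr ⟨hs, h1⟩
    rw [onx, dif_pos ⟨s, hmem⟩]
    exact_mod_cast EReal.coe_le_coe_iff.mpr (Finset.min'_le _ s hmem)

lemma olo_gapIdx_le (S : Finset ℝ) (y : ℝ) : olo (gapIdx S y) ≤ (y : EReal) := by
  classical
  rw [gapIdx]
  split_ifs with h
  · exact EReal.coe_le_coe_iff.mpr (Finset.mem_filter.mp (Finset.max'_mem _ h)).2
  · exact bot_le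

lemma le_olo_gapIdx (S : Finset ℝ) (y : ℝ) (s : ℝ) (hs : s ∈ S) (hsy : s ≤ y) :
    (s : EReal) ≤ olo (gapIdx S y) := by
  classical
  have hmem : s ∈ S.filter (fun s : ℝ => s ≤ y) := Finset.mem_filter.mpr ⟨hs, hsy⟩
  rw [gapIdx, dif_pos ⟨s, hmem⟩]
  exact EReal.coe_le_coe_iff.mpr (Finset.le_max' _ s hmem)

lemma gapIdx_mem (S : Finset ℝ) (y : ℝ) :
    gapIdx S y ∈ insert none (S.image some) := by
  classical
  rw [gapIdx]
  split_ifs with h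
  · exact Finset.mem_insert_of_mem (Finset.mem_image_of_mem some
      (Finset.mem_filter.mp (Finset.max'_mem _ h)).1)
  · exact Finset.mem_insert_self _ _

lemma olo_gapIdx_cases (S : Finset ℝ) (y : ℝ) :
    olo (gapIdx S y) = ⊥ ∨ ∃ s ∈ S, s ≤ y ∧ olo (gapIdx S y) = (s : EReal) := by
  classical
  rw [gapIdx]
  split_ifs with h
  · right
    obtain ⟨h1, h2⟩ := Finset.mem_filter.mp (Finset.max'_mem _ h)
    exact ⟨_, h1, h2, rfl⟩
  · exact Or.inl rfl

lemma onx_gapIdx_cases (S : Finset ℝ) (y : ℝ) :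
    onx S (gapIdx S y) = ⊤ ∨
      ∃ s ∈ S, y < s ∧ onx S (gapIdx S y) = (s : EReal) := by
  classical
  rw [onx]
  split_ifs with h
  · right
    obtain ⟨h1, h2⟩ := Finset.mem_filter.mp (Finset.min'_mem _ h)
    refine ⟨_, h1, ?_, rfl⟩
    by_contra hc
    push_neg at hc
    exact absurd (le_olo_gapIdx S y _ h1 hc) (not_le.mpr h2)
  · exact Or.inl rfl

lemma le_onx (S : Finset ℝ) (o : Option ℝ) (b : EReal)
    (h : ∀ s ∈ S, olo o < (s : EReal) → b ≤ (s : EReal)) : b ≤ onx S o := by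
  classical
  rw [onx]
  split_ifs with h1
  · obtain ⟨hm1, hm2⟩ := Finset.mem_filter.mp (Finset.min'_mem _ h1)
    exact h _ hm1 hm2
  · exact le_top

lemma gap_encloses {S : Finset ℝ} {a b : EReal} {x₀ : ℝ}
    (habS : ∀ s ∈ S, (s : EReal) ≤ a ∨ b ≤ (s : EReal))
    (hx₀a : a < (x₀ : EReal)) (hx₀b : (x₀ : EReal) < b) :
    olo (gapIdx S x₀) ≤ a ∧ b ≤ onx S (gapIdx S x₀) := by
  constructor
  · rcases olo_gapIdx_cases S x₀ with h | ⟨s, hs, hsy, he⟩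
    · rw [h]; exact bot_le
    · rw [he]
      rcases habS s hs with h1 | h1
      · exact h1
      · exact absurd (lt_of_le_of_lt (le_trans h1 (EReal.coe_le_coe_iff.mpr hsy)) hx₀b)
          (lt_irrefl _)
  · refine le_onx S _ b (fun s hs hlt => ?_)
    rcases habS s hs with h1 | h1
    · exfalso
      have hsx : s ≤ x₀ := by
        have := lt_of_le_of_lt h1 hx₀a
        exact_mod_cast le_of_lt (EReal.coe_lt_coe_iff.mp this)
      exact absurd (le_olo_gapIdx S x₀ s hs hsx) (not_le.mpr hlt)
    · exact h1
lemma sawtooth_aff {t : ℕ} {σ : ℝ → ℝ} (hσ : Sawtooth t σ) :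
    1 ≤ t ∧ ∃ S : Finset ℝ, S.card + 1 ≤ t ∧ AffOff S σ := by
  classical
  obtain ⟨β, h0, hlast, hmono, hall⟩ := hσ
  have ht : 1 ≤ t := by
    rcases Nat.eq_zero_or_pos t with h | h
    · exfalso
      subst h
      have h1 : Fin.last 0 = (0 : Fin 1) := rfl
      rw [h1, h0] at hlast
      exact absurd hlast (by simp)
    · exact h
  set S : Finset ℝ :=
    Finset.image (fun j : Fin (t-1) => (β ⟨j.val+1, by omega⟩).toReal) Finset.univ with hSdef
  have hcard : S.card + 1 ≤ t := by
    have h1 : S.card ≤ t - 1 := by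
      rw [hSdef]
      refine le_trans Finset.card_image_le ?_
      simp
    omega
  refine ⟨ht, S, hcard, ?_⟩
  intro a b hab
  by_cases hne : ∃ x : ℝ, a < (x : EReal) ∧ (x : EReal) < b
  case neg =>
    push_neg at hne
    exact ⟨0, 0, fun x hx hx' => absurd (hne x hx) (not_le.mpr hx')⟩
  obtain ⟨x₀, hx₀a, hx₀b⟩ := hne
  set A := Finset.univ.filter (fun i : Fin t => β i.castSucc ≤ (x₀ : EReal)) with hAdef
  have hA : A.Nonempty := by
    refine ⟨⟨0, ht⟩, Finset.mem_filter.mpr ⟨Finset.mem_univ _, ?_⟩⟩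
    have : (⟨0, ht⟩ : Fin t).castSucc = (0 : Fin (t+1)) := rfl
    rw [this, h0]
    exact bot_le
  set i := A.max' hA with hidef
  have hile : β i.castSucc ≤ (x₀ : EReal) := (Finset.mem_filter.mp (A.max'_mem hA)).2
  have hisucc : (x₀ : EReal) < β i.succ := by
    by_contra hc
    push_neg at hc
    have hlt : i.val + 1 < t := by
      by_contra hge
      have hieq : i.succ = Fin.last t := by
        ext
        simp only [Fin.val_succ, Fin.val_last]
        omega
      rw [hieq, hlast] at hc
      exact absurd hc (not_le.mpr (EReal.coe_lt_top x₀))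
    have hi'A : (⟨i.val+1, hlt⟩ : Fin t) ∈ A := by
      refine Finset.mem_filter.mpr ⟨Finset.mem_univ _, ?_⟩
      have : (⟨i.val+1, hlt⟩ : Fin t).castSucc = i.succ := by ext; rfl
      rw [this]
      exact hc
    have := A.le_max' _ hi'A
    rw [← hidef] at this
    rw [Fin.le_def] at this
    simp at this
  obtain ⟨c, d, hcd⟩ := hall i
  refine ⟨c, d, fun x hx hx' => hcd x ?_ ?_⟩
  · rcases le_or_gt (x₀ : EReal) (x : EReal) with hcase | hcase
    · exact le_trans hile hcase
    · rcases eq_or_ne (β i.castSucc) ⊥ with hbot | hbot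
      · rw [hbot]; exact bot_le
      · have hne_top : β i.castSucc ≠ ⊤ := by
          intro h
          rw [h] at hile
          exact absurd hile (not_le.mpr (EReal.coe_lt_top x₀))
        have hr : ((β i.castSucc).toReal : EReal) = β i.castSucc :=
          EReal.coe_toReal hne_top hbot
        have hipos : 0 < i.val := by
          by_contra hip
          have : i.castSucc = (0 : Fin (t+1)) := by ext; simpa using hip
          rw [this, h0] at hbot
          exact hbot rfl
        have hrS : (β i.castSucc).toReal ∈ S := by
          rw [hSdef]
          refine Finset.mem_image.mpr ⟨⟨i.val - 1, by omega⟩, Finset.mem_univ _, ?_⟩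
          exact congrArg _ (congrArg _ (Fin.ext (by simp; omega)))
        rcases hab _ hrS with h1 | h1
        · rw [hr] at h1
          exact le_of_lt (lt_of_le_of_lt h1 hx)
        · exfalso
          rw [hr] at h1
          exact absurd (lt_of_le_of_lt (le_trans h1 hile) hx₀b) (lt_irrefl _)
  · rcases le_or_gt (x : EReal) (x₀ : EReal) with hcase | hcase
    · exact lt_of_le_of_lt hcase hisucc
    · rcases eq_or_ne (β i.succ) ⊤ with htop | htop
      · rw [htop]; exact EReal.coe_lt_top x
      · have hne_bot : β i.succ ≠ ⊥ := by
          intro h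
          rw [h] at hisucc
          exact absurd hisucc (by simp)
        have hr : ((β i.succ).toReal : EReal) = β i.succ := EReal.coe_toReal htop hne_bot
        have hlt : i.val + 1 < t := by
          by_contra hge
          have hieq : i.succ = Fin.last t := by
            ext
            simp only [Fin.val_succ, Fin.val_last]
            omega
          rw [hieq, hlast] at htop
          exact htop rfl
        have hrS : (β i.succ).toReal ∈ S := by
          rw [hSdef]
          refine Finset.mem_image.mpr ⟨⟨i.val, by omega⟩, Finset.mem_univ _, ?_⟩
          exact congrArg _ (congrArg _ (Fin.ext (by simp)))
        rcases hab _ hrS with h1 | h1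
        · exfalso
          rw [hr] at h1
          exact absurd (lt_of_le_of_lt (le_trans h1 (le_of_lt hx₀a)) hisucc) (lt_irrefl _)
        · rw [hr] at h1
          exact lt_of_lt_of_le hx' h1
lemma sigComp {t m d : ℕ} {σ : ℝ → ℝ} {Sσ S : Finset ℝ} (hσA : AffOff Sσ σ)
    (hσc : Sσ.card + 1 ≤ t) (hm : 1 ≤ m) (hd : d ≤ m) (h : Fin d → ℝ → ℝ)
    (hh : ∀ j, AffOff S (h j)) :
    ∃ S' : Finset ℝ, (∀ j, AffOff S' (fun x => σ (h j x))) ∧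
      S'.card + 1 ≤ (S.card + 1) * (t * m) := by
  classical
  have ht : 1 ≤ t := le_trans (Nat.le_add_left 1 _) hσc
  have key : ∀ (o : Option ℝ) (j : Fin d), ∃ c e : ℝ, ∀ x : ℝ,
      olo o < (x : EReal) → (x : EReal) < onx S o → h j x = c * x + e :=
    fun o j => hh j (olo o) (onx S o) (onx_avoid S o)
  choose c e hce using key
  set newb : Option ℝ → Fin d → Finset ℝ := fun o j =>
    if c o j = 0 then ∅ else Sσ.image (fun s => (s - e o j) / c o j) with hnewb
  set gI : Finset (Option ℝ) := insert none (S.image some) with hgI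
  set S' := S ∪ gI.biUnion (fun o => Finset.univ.biUnion (fun j => newb o j)) with hS'
  have hnewb_card : ∀ o j, (newb o j).card ≤ t - 1 := by
    intro o j
    rw [hnewb]
    dsimp only
    split_ifs with hc
    · simp
    · exact le_trans (Finset.card_image_le) (by omega)
  refine ⟨S', ?_, ?_⟩
  · intro j a b hab
    by_cases hne : ∃ x : ℝ, a < (x : EReal) ∧ (x : EReal) < b
    case neg =>
      push_neg at hne
      exact ⟨0, 0, fun x hx hx' => absurd (hne x hx) (not_le.mpr hx')⟩
    obtain ⟨x₀, hx₀a, hx₀b⟩ := hne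
    have habS : ∀ s ∈ S, (s : EReal) ≤ a ∨ b ≤ (s : EReal) :=
      fun s hs => hab s (by rw [hS']; exact Finset.mem_union_left _ hs)
    obtain ⟨hloa, hbnx⟩ := gap_encloses habS hx₀a hx₀b
    set o := gapIdx S x₀ with ho
    have hoI : o ∈ gI := by rw [hgI, ho]; exact gapIdx_mem S x₀
    have haff : ∀ x : ℝ, a < (x : EReal) → (x : EReal) < b → h j x = c o j * x + e o j :=
      fun x hx hx' => hce o j x (lt_of_le_of_lt hloa hx) (lt_of_lt_of_le hx' hbnx)
    by_cases hc : c o j = 0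
    · refine ⟨0, σ (e o j), fun x hx hx' => ?_⟩
      show σ (h j x) = 0 * x + σ (e o j)
      rw [haff x hx hx', hc]
      simp
    · set y₀ := c o j * x₀ + e o j with hy₀
      have hnewb_sub : ∀ s ∈ Sσ, (s - e o j) / c o j ∈ S' := by
        intro s hs
        rw [hS']
        refine Finset.mem_union_right _ (Finset.mem_biUnion.mpr ⟨o, hoI,
          Finset.mem_biUnion.mpr ⟨j, Finset.mem_univ _, ?_⟩⟩)
        rw [hnewb]
        dsimp only
        rw [if_neg hc]
        exact Finset.mem_image_of_mem _ hs
      -- any point of (a,b) whose image under the affine map hits Sσ gives a contradiction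
      have hhit : ∀ s ∈ Sσ, ∀ x : ℝ, a < (x : EReal) → (x : EReal) < b →
          c o j * x + e o j ≠ s := by
        intro s hs x hx hx' heq
        have hx'' : (s - e o j) / c o j = x := by
          rw [div_eq_iff hc]
          linear_combination -heq
        rcases hab _ (hnewb_sub s hs) with h1 | h1 <;> rw [hx''] at h1
        · exact absurd (lt_of_le_of_lt h1 hx) (lt_irrefl _)
        · exact absurd (lt_of_lt_of_le hx' h1) (lt_irrefl _)
      have hmid : ∀ s ∈ Sσ, ∀ x : ℝ, a < (x : EReal) → (x : EReal) < b →
          ((c o j * x + e o j ≤ s ∧ s ≤ y₀) ∨ (y₀ ≤ s ∧ s ≤ c o j * x + e o j)) → False := by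
        intro s hs x hx hx' hcase
        set x' := (s - e o j) / c o j with hx'def
        have hval : c o j * x' + e o j = s := by rw [hx'def]; field_simp; ring
        have hx'ab : a < (x' : EReal) ∧ (x' : EReal) < b := by
          rcases le_or_gt 0 (c o j) with hsgn | hsgn
          · have hsgn' : 0 < c o j := lt_of_le_of_ne hsgn (Ne.symm hc)
            rcases hcase with ⟨h1, h2⟩ | ⟨h1, h2⟩
            · -- x ≤ x' ≤ x₀
              have hxx' : x ≤ x' := by nlinarith [hval]
              have hx'x₀ : x' ≤ x₀ := by rw [hy₀] at h2; nlinarith [hval]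
              exact ⟨lt_of_lt_of_le hx (EReal.coe_le_coe_iff.mpr hxx'),
                lt_of_le_of_lt (EReal.coe_le_coe_iff.mpr hx'x₀) hx₀b⟩
            · have hx₀x' : x₀ ≤ x' := by rw [hy₀] at h1; nlinarith [hval]
              have hx'x : x' ≤ x := by nlinarith [hval]
              exact ⟨lt_of_lt_of_le hx₀a (EReal.coe_le_coe_iff.mpr hx₀x'),
                lt_of_le_of_lt (EReal.coe_le_coe_iff.mpr hx'x) hx'⟩
          · rcases hcase with ⟨h1, h2⟩ | ⟨h1, h2⟩
            · have hx'x : x' ≤ x := by nlinarith [hval]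
              have hx₀x' : x₀ ≤ x' := by rw [hy₀] at h2; nlinarith [hval]
              exact ⟨lt_of_lt_of_le hx₀a (EReal.coe_le_coe_iff.mpr hx₀x'),
                lt_of_le_of_lt (EReal.coe_le_coe_iff.mpr hx'x) hx'⟩
            · have hxx' : x ≤ x' := by nlinarith [hval]
              have hx'x₀ : x' ≤ x₀ := by rw [hy₀] at h1; nlinarith [hval]
              exact ⟨lt_of_lt_of_le hx (EReal.coe_le_coe_iff.mpr hxx'),
                lt_of_le_of_lt (EReal.coe_le_coe_iff.mpr hx'x₀) hx₀b⟩
        exact hhit s hs x' hx'ab.1 hx'ab.2 hval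
      -- the gap of Sσ around y₀
      have havoidσ : ∀ s ∈ Sσ, (s : EReal) ≤ olo (gapIdx Sσ y₀) ∨
          onx Sσ (gapIdx Sσ y₀) ≤ (s : EReal) := by
        intro s hs
        rcases le_or_gt s y₀ with h1 | h1
        · exact Or.inl (le_olo_gapIdx Sσ y₀ s hs h1)
        · refine Or.inr ?_
          rcases onx_avoid Sσ (gapIdx Sσ y₀) s hs with h2 | h2
          · exfalso
            exact absurd (lt_of_le_of_lt h2 (lt_of_le_of_lt (olo_gapIdx_le Sσ y₀)
              (EReal.coe_lt_coe_iff.mpr h1))) (lt_irrefl _)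
          · exact h2
      obtain ⟨cσ, dσ, hσcd⟩ := hσA _ _ havoidσ
      refine ⟨cσ * c o j, cσ * e o j + dσ, fun x hx hx' => ?_⟩
      have hu : olo (gapIdx Sσ y₀) < ((c o j * x + e o j : ℝ) : EReal) := by
        rcases olo_gapIdx_cases Sσ y₀ with h1 | ⟨s, hs, hsy, h1⟩
        · rw [h1]; exact EReal.bot_lt_coe _
        · rw [h1, EReal.coe_lt_coe_iff]
          by_contra hcon
          push_neg at hcon
          exact hmid s hs x hx hx' (Or.inl ⟨hcon, hsy⟩)
      have hv : ((c o j * x + e o j : ℝ) : EReal) < onx Sσ (gapIdx Sσ y₀) := by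
        rcases onx_gapIdx_cases Sσ y₀ with h1 | ⟨s, hs, hsy, h1⟩
        · rw [h1]; exact EReal.coe_lt_top _
        · rw [h1, EReal.coe_lt_coe_iff]
          by_contra hcon
          push_neg at hcon
          exact hmid s hs x hx hx' (Or.inr ⟨le_of_lt hsy, hcon⟩)
      show σ (h j x) = cσ * c o j * x + (cσ * e o j + dσ)
      rw [haff x hx hx', hσcd _ hu hv]
      ring
  · -- cardinality
    have h1 : S'.card ≤ S.card + (S.card + 1) * (m * (t-1)) := by
      rw [hS']
      refine le_trans (Finset.card_union_le _ _) (Nat.add_le_add_left ?_ _)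
      refine le_trans (Finset.card_biUnion_le) ?_
      have hbnd : ∀ o ∈ gI, (Finset.univ.biUnion (fun j => newb o j)).card ≤ m * (t-1) := by
        intro o _
        refine le_trans (Finset.card_biUnion_le) ?_
        refine le_trans (Finset.sum_le_sum (fun j _ => hnewb_card o j)) ?_
        simp only [Finset.sum_const, Finset.card_univ, Fintype.card_fin, smul_eq_mul]
        exact Nat.mul_le_mul_right _ hd
      refine le_trans (Finset.sum_le_sum hbnd) ?_
      simp only [Finset.sum_const, smul_eq_mul]
      have hgIcard : gI.card ≤ S.card + 1 := by
        rw [hgI]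
        exact le_trans (Finset.card_insert_le _ _) (by
          simp only [Nat.add_le_add_iff_right]
          exact Finset.card_image_le)
      exact Nat.mul_le_mul_right _ hgIcard
    have h2 : 1 + m * (t - 1) ≤ t * m := by
      have ht1 : t - 1 + 1 = t := by omega
      calc 1 + m * (t - 1) ≤ m + m * (t - 1) := Nat.add_le_add_right hm _
        _ = m * ((t - 1) + 1) := by ring
        _ = m * t := by rw [ht1]
        _ = t * m := Nat.mul_comm _ _
    calc S'.card + 1 ≤ (S.card + (S.card + 1) * (m * (t - 1))) + 1 := by omega
      _ = (S.card + 1) * (1 + m * (t - 1)) := by ring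
      _ ≤ (S.card + 1) * (t * m) := Nat.mul_le_mul_left _ h2
lemma layers_aff {σ : ℝ → ℝ} {m t : ℕ} (hσ : Sawtooth t σ) (hm : 1 ≤ m)
    {l d : ℕ} {F : ℝ → Fin d → ℝ} (hF : IsLayers σ m l d F) :
    ∃ S : Finset ℝ, (∀ j, AffOff S (fun x => F x j)) ∧ S.card + 1 ≤ (t * m) ^ l := by
  obtain ⟨ht, Sσ, hσc, hσA⟩ := sawtooth_aff hσ
  induction hF with
  | base d hd w b =>
    have hinner : ∀ j : Fin d, AffOff (∅ : Finset ℝ) (fun x => b j + w j * x) := by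
      intro j a a' _
      exact ⟨w j, b j, fun x _ _ => by ring⟩
    obtain ⟨S', h1, h2⟩ := sigComp hσA hσc hm hd _ hinner
    refine ⟨S', h1, ?_⟩
    simpa using h2
  | step l d d' F hFprev hd w b ih =>
    obtain ⟨S, hS, hSc⟩ := ih
    have hinner : ∀ j : Fin d, AffOff S (fun x => b j + ∑ i, w j i * F x i) :=
      fun j => affOff_inner hS (b j) (w j)
    obtain ⟨S', h1, h2⟩ := sigComp hσA hσc hm hd _ hinner
    refine ⟨S', h1, le_trans h2 ?_⟩
    rw [pow_succ]
    exact Nat.mul_le_mul_right _ hSc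
lemma ite_ne_cases {P Q : Prop} [Decidable P] [Decidable Q]
    (hne : (if P then (1:ℕ) else 0) ≠ if Q then 1 else 0) : (P ∧ ¬Q) ∨ (¬P ∧ Q) := by
  by_cases hP : P <;> by_cases hQ : Q <;> simp [hP, hQ] at hne ⊢ <;> trivial

lemma four_pt {cc dd p1 p2 p3 p4 : ℝ} (h12 : p1 < p2) (h23 : p2 ≤ p3) (h34 : p3 < p4)
    (f1 : (if (1:ℝ)/2 ≤ cc * p1 + dd then (1:ℕ) else 0) ≠
      (if (1:ℝ)/2 ≤ cc * p2 + dd then (1:ℕ) else 0))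
    (f2 : (if (1:ℝ)/2 ≤ cc * p3 + dd then (1:ℕ) else 0) ≠
      (if (1:ℝ)/2 ≤ cc * p4 + dd then (1:ℕ) else 0)) : False := by
  rcases ite_ne_cases f1 with ⟨h1, h2⟩ | ⟨h1, h2⟩ <;>
      rcases ite_ne_cases f2 with ⟨h3, h4⟩ | ⟨h3, h4⟩
  · rw [not_le] at h2 h4
    nlinarith [mul_pos (sub_pos.mpr h12) (sub_pos.mpr h34)]
  · rw [not_le] at h2 h3
    nlinarith [mul_pos (sub_pos.mpr h12) (sub_pos.mpr h34),
      mul_nonneg (sub_nonneg.mpr h23) (le_of_lt (sub_pos.mpr h12)),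
      mul_nonneg (sub_nonneg.mpr h23) (le_of_lt (sub_pos.mpr h34))]
  · rw [not_le] at h1 h4
    nlinarith [mul_pos (sub_pos.mpr h12) (sub_pos.mpr h34),
      mul_nonneg (sub_nonneg.mpr h23) (le_of_lt (sub_pos.mpr h12)),
      mul_nonneg (sub_nonneg.mpr h23) (le_of_lt (sub_pos.mpr h34))]
  · rw [not_le] at h1 h3
    nlinarith [mul_pos (sub_pos.mpr h12) (sub_pos.mpr h34)]
lemma counting {g : ℝ → ℝ} {S : Finset ℝ} (hg : AffOff S g) {n : ℕ} (hn : 0 < n) :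
    n ≤ 2 * ((Finset.range n).filter
        (fun i : ℕ => ¬ (cls g ((i : ℝ) / (n : ℝ)) = i % 2))).card + 3 * S.card + 2 := by
  classical
  have hnR : (0:ℝ) < (n:ℝ) := by exact_mod_cast hn
  set X : ℕ → ℝ := fun i => (i : ℝ) / (n : ℝ) with hX
  have hXmono : ∀ {a b : ℕ}, a < b → X a < X b := by
    intro a b h
    rw [hX]
    exact (div_lt_div_iff_of_pos_right hnR).mpr (by exact_mod_cast h)
  have hXle : ∀ {a b : ℕ}, a ≤ b → X a ≤ X b := by
    intro a b h
    rcases Nat.lt_or_ge a b with h' | h'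
    · exact le_of_lt (hXmono h')
    · have : a = b := by omega
      rw [this]
  have hXnonneg : ∀ i : ℕ, 0 ≤ X i := by
    intro i
    rw [hX]
    positivity
  set Mist := (Finset.range n).filter (fun i => ¬ (cls g (X i) = i % 2)) with hMist
  set flips := (Finset.range (n-1)).filter
    (fun j => ¬ (cls g (X j) = cls g (X (j+1)))) with hflips
  set dirty := flips.filter (fun j => ∃ s ∈ S, X j ≤ s ∧ s ≤ X (j+1)) with hdirty
  set clean := flips.filter (fun j => ¬ ∃ s ∈ S, X j ≤ s ∧ s ≤ X (j+1)) with hclean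
  -- Step A : non-flips are covered by mistakes
  have hsplitA : flips.card + ((Finset.range (n-1)).filter
      (fun j => ¬ ¬ (cls g (X j) = cls g (X (j+1))))).card = n - 1 := by
    rw [hflips, Finset.card_filter_add_card_filter_not, Finset.card_range]
  have hnf : ((Finset.range (n-1)).filter
      (fun j => ¬ ¬ (cls g (X j) = cls g (X (j+1))))).card ≤ 2 * Mist.card := by
    apply Finset.card_le_mul_card_image_of_maps_to
      (f := fun j => if ¬ (cls g (X j) = j % 2) then j else j + 1)
    · intro j hj
      obtain ⟨hjr, hjnf⟩ := Finset.mem_filter.mp hj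
      rw [not_not] at hjnf
      rw [Finset.mem_range] at hjr
      by_cases hm : cls g (X j) = j % 2
      · rw [if_neg (not_not.mpr hm)]
        refine Finset.mem_filter.mpr ⟨Finset.mem_range.mpr (by omega), ?_⟩
        intro hc
        have : j % 2 = (j+1) % 2 := by rw [← hm, hjnf, hc]
        omega
      · rw [if_pos hm]
        exact Finset.mem_filter.mpr ⟨Finset.mem_range.mpr (by omega), hm⟩
    · intro i _
      have hsub : (((Finset.range (n-1)).filter
          (fun j => ¬ ¬ (cls g (X j) = cls g (X (j+1))))).filter
            (fun j => (if ¬ (cls g (X j) = j % 2) then j else j + 1) = i)) ⊆ {i, i-1} := by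
        intro j hj
        obtain ⟨_, hji⟩ := Finset.mem_filter.mp hj
        split_ifs at hji <;> simp <;> omega
      refine le_trans (Finset.card_le_card hsub) ?_
      refine le_trans (Finset.card_insert_le _ _) ?_
      simp
  -- Step B : flips split into dirty and clean
  have hsplitB : dirty.card + clean.card = flips.card :=
    Finset.card_filter_add_card_filter_not
      (s := flips) (p := fun j => ∃ s ∈ S, X j ≤ s ∧ s ≤ X (j+1))
  -- Step C : dirty flips bounded by breakpoints
  have hdirtyC : dirty.card ≤ 2 * S.card := by
    apply Finset.card_le_mul_card_image_of_maps_to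
      (f := fun j => if h : ∃ s ∈ S, X j ≤ s ∧ s ≤ X (j+1) then h.choose else 0) (t := S)
    · intro j hj
      obtain ⟨_, hP⟩ := Finset.mem_filter.mp hj
      rw [dif_pos hP]
      exact hP.choose_spec.1
    · intro s _
      have hsub : (dirty.filter (fun j =>
          (if h : ∃ s ∈ S, X j ≤ s ∧ s ≤ X (j+1) then h.choose else 0) = s)) ⊆
            Finset.Icc (⌊s * (n:ℝ)⌋₊ - 1) ⌊s * (n:ℝ)⌋₊ := by
        intro j hj
        obtain ⟨hjd, hjs⟩ := Finset.mem_filter.mp hj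
        obtain ⟨_, hP⟩ := Finset.mem_filter.mp hjd
        rw [dif_pos hP] at hjs
        obtain ⟨_, hP1, hP2⟩ := hP.choose_spec
        rw [hjs] at hP1 hP2
        have hs0 : 0 ≤ s := le_trans (hXnonneg j) hP1
        have hsn0 : 0 ≤ s * (n:ℝ) := mul_nonneg hs0 (le_of_lt hnR)
        have h1 : (j:ℝ) ≤ s * (n:ℝ) := by
          rw [hX] at hP1
          calc (j:ℝ) = (j:ℝ)/(n:ℝ) * (n:ℝ) := by field_simp
            _ ≤ s * (n:ℝ) := mul_le_mul_of_nonneg_right hP1 (le_of_lt hnR)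
        have h2 : s * (n:ℝ) ≤ (j:ℝ) + 1 := by
          rw [hX] at hP2
          calc s * (n:ℝ) ≤ ((j+1:ℕ):ℝ)/(n:ℝ) * (n:ℝ) :=
              mul_le_mul_of_nonneg_right hP2 (le_of_lt hnR)
            _ = (j:ℝ) + 1 := by push_cast; field_simp
        have hj1 : j ≤ ⌊s * (n:ℝ)⌋₊ := Nat.le_floor h1
        have hj2 : ⌊s * (n:ℝ)⌋₊ ≤ j + 1 := by
          have := Nat.floor_le hsn0
          have : (⌊s * (n:ℝ)⌋₊ : ℝ) ≤ (j:ℝ) + 1 := le_trans this h2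
          exact_mod_cast this
        exact Finset.mem_Icc.mpr ⟨by omega, hj1⟩
      refine le_trans (Finset.card_le_card hsub) ?_
      rw [Nat.card_Icc]
      omega
  -- Step D : clean flips bounded by gaps
  have hcleanD : clean.card ≤ S.card + 1 := by
    have aux : ∀ j j', j ∈ clean → j' ∈ clean → j < j' →
        gapIdx S (X j) = gapIdx S (X j') → False := by
      intro j j' hj hj' hlt heq
      obtain ⟨hjf, hjc⟩ := Finset.mem_filter.mp hj
      obtain ⟨hj'f, hj'c⟩ := Finset.mem_filter.mp hj'
      have hflipj : ¬ (cls g (X j) = cls g (X (j+1))) := (Finset.mem_filter.mp hjf).2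
      have hflipj' : ¬ (cls g (X j') = cls g (X (j'+1))) := (Finset.mem_filter.mp hj'f).2
      push_neg at hjc hj'c
      have hu : olo (gapIdx S (X j')) < (X j : EReal) := by
        rw [← heq]
        rcases olo_gapIdx_cases S (X j) with h1 | ⟨s, hs, hsy, h1⟩
        · rw [h1]; exact EReal.bot_lt_coe _
        · rw [h1, EReal.coe_lt_coe_iff]
          rcases lt_or_eq_of_le hsy with h2 | h2
          · exact h2
          · exfalso
            have := hjc s hs (le_of_eq h2.symm)
            have hlt' := hXmono (show j < j + 1 by omega)
            rw [h2] at this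
            linarith
      have hv : (X (j'+1) : EReal) < onx S (gapIdx S (X j')) := by
        rcases onx_gapIdx_cases S (X j') with h1 | ⟨s, hs, hsy, h1⟩
        · rw [h1]; exact EReal.coe_lt_top _
        · rw [h1, EReal.coe_lt_coe_iff]
          exact hj'c s hs (le_of_lt hsy)
      obtain ⟨c, d, hcd⟩ := hg _ _ (onx_avoid S (gapIdx S (X j')))
      have hord1 : X j < X (j+1) := hXmono (by omega)
      have hord2 : X (j+1) ≤ X j' := hXle (by omega)
      have hord3 : X j' < X (j'+1) := hXmono (by omega)
      have hin : ∀ p : ℕ, p = j ∨ p = j + 1 ∨ p = j' ∨ p = j' + 1 →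
          g (X p) = c * X p + d := by
        intro p hp
        refine hcd (X p) ?_ ?_
        · refine lt_of_lt_of_le hu (EReal.coe_le_coe_iff.mpr ?_)
          rcases hp with rfl | rfl | rfl | rfl
          · exact le_refl _
          · linarith
          · linarith
          · linarith
        · refine lt_of_le_of_lt (EReal.coe_le_coe_iff.mpr ?_) hv
          rcases hp with rfl | rfl | rfl | rfl
          · linarith
          · linarith
          · linarith
          · exact le_refl _
      unfold cls at hflipj hflipj'
      rw [hin j (by tauto), hin (j+1) (by tauto)] at hflipj
      rw [hin j' (by tauto), hin (j'+1) (by tauto)] at hflipj'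
      exact four_pt hord1 hord2 hord3 hflipj hflipj'
    refine le_trans (Finset.card_le_card_of_injOn (fun j => gapIdx S (X j))
      (fun j _ => gapIdx_mem S (X j)) ?_) ?_
    · intro j hj j' hj' heq
      by_contra hne
      rcases Nat.lt_or_ge j j' with h | h
      · exact aux j j' hj hj' h heq
      · exact aux j' j hj' hj (by omega) heq.symm
    · refine le_trans (Finset.card_insert_le _ _) ?_
      have := Finset.card_image_le (s := S) (f := some)
      omega
  -- combine
  have hflipcard : flips.card ≤ 3 * S.card + 1 := by omega
  omega
lemma fm_eq_net (x : ℝ) :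
    fm x = relu ((0:ℝ) + ((2:ℝ) * relu ((0:ℝ) + 1 * x) + ((-4:ℝ) * relu (-(1/2:ℝ) + 1 * x))) ) := by
  have hr : ∀ a : ℝ, relu a = max 0 a := fun _ => rfl
  unfold fm
  rcases le_or_gt x 0 with h | h
  · rw [show relu ((0:ℝ)+1*x) = 0 from max_eq_left (by linarith),
      show relu (-(1/2:ℝ)+1*x) = 0 from max_eq_left (by linarith)]
    norm_num [hr]
    split_ifs with h1 h2
    · linarith [h1.1]
    · linarith [h2.1]
    · rfl
  · rcases le_or_gt x (1/2) with h2 | h2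
    · rw [show relu ((0:ℝ)+1*x) = 0+1*x from max_eq_right (by linarith),
        show relu (-(1/2:ℝ)+1*x) = 0 from max_eq_left (by linarith),
        show relu ((0:ℝ) + (2*(0+1*x) + -4*0)) = 0 + (2*(0+1*x) + -4*0) from
          max_eq_right (by linarith)]
      rw [if_pos ⟨le_of_lt h, h2⟩]; ring
    · rcases le_or_gt x 1 with h3 | h3
      · rw [show relu ((0:ℝ)+1*x) = 0+1*x from max_eq_right (by linarith),
          show relu (-(1/2:ℝ)+1*x) = -(1/2)+1*x from max_eq_right (by linarith),
          show relu ((0:ℝ) + (2*(0+1*x) + -4*(-(1/2)+1*x))) = 0 + (2*(0+1*x) + -4*(-(1/2)+1*x)) from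
            max_eq_right (by linarith)]
        rw [if_neg (by intro hh; linarith [hh.2]), if_pos ⟨h2, h3⟩]; ring
      · rw [show relu ((0:ℝ)+1*x) = 0+1*x from max_eq_right (by linarith),
          show relu (-(1/2:ℝ)+1*x) = -(1/2)+1*x from max_eq_right (by linarith),
          show relu ((0:ℝ) + (2*(0+1*x) + -4*(-(1/2)+1*x))) = 0 from
            max_eq_left (by linarith)]
        rw [if_neg (by intro hh; linarith [hh.2]), if_neg (by intro hh; linarith [hh.2])]

lemma fm_mem_NN : fm ∈ NN relu 2 2 := by
  refine ⟨fun x j => relu ((![(0:ℝ)] j) + ∑ i : Fin 2, (![![(2:ℝ), -4]] j i) * (fun x (j : Fin 2) => relu ((![(0:ℝ), -(1/2)] j) + (![(1:ℝ),1] j) * x)) x i), ?_, ?_⟩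
  · exact IsLayers.step 1 1 2 _ (IsLayers.base 2 le_rfl ![(1:ℝ),1] ![(0:ℝ), -(1/2)]) (by norm_num) ![![(2:ℝ), -4]] ![(0:ℝ)]
  · intro x
    rw [fm_eq_net x]
    simp [Fin.sum_univ_two]
lemma fm_iter (k i : ℕ) (hi : i ≤ 2 ^ k) : fm^[k] ((i : ℝ) / 2 ^ k) = ((i % 2 : ℕ) : ℝ) := by
  induction k generalizing i with
  | zero =>
    interval_cases i <;> simp
  | succ k ih =>
    rw [Function.iterate_succ_apply]
    have h2 : ((2:ℝ)) ^ (k+1) = 2 * 2 ^ k := by ring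
    have hpos : (0:ℝ) < 2 ^ k := by positivity
    rcases le_or_gt i (2^k) with h | h
    · have hx1 : fm ((i:ℝ) / 2 ^ (k+1)) = (i:ℝ) / 2 ^ k := by
        unfold fm
        rw [if_pos]
        · field_simp; ring
        constructor
        · positivity
        · rw [h2, div_le_iff₀ (by positivity)]
          have : (i:ℝ) ≤ 2^k := by exact_mod_cast h
          linarith
      rw [hx1, ih i h]
    · set j := 2^(k+1) - i with hj
      have hile : i ≤ 2^(k+1) := hi
      have hcast : (j:ℝ) = 2^(k+1) - (i:ℝ) := by
        have := Nat.cast_sub hile (R := ℝ)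
        rw [hj, this]; push_cast; ring
      have hx1 : fm ((i:ℝ) / 2 ^ (k+1)) = (j:ℝ) / 2 ^ k := by
        unfold fm
        have hgt : (1:ℝ)/2 < (i:ℝ) / 2^(k+1) := by
          rw [div_lt_div_iff₀ (by norm_num) (by positivity), h2]
          have : (2:ℝ)^k < i := by exact_mod_cast h
          linarith
        have hle1 : (i:ℝ) / 2^(k+1) ≤ 1 := by
          rw [div_le_one (by positivity)]
          exact_mod_cast hi
        rw [if_neg (by intro hh; linarith [hh.2]), if_pos ⟨hgt, hle1⟩, hcast]
        field_simp; ring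
      have hjle : j ≤ 2 ^ k := by omega
      rw [hx1, ih j hjle]
      congr 1
      have : 2^(k+1) = 2 * 2^k := by ring
      omega

/-- on the `2^k`-alternating-point problem, a recurrent ReLU network with
`2` layers of at most `2` nodes iterated `k` times achieves zero classification error,
while every network in `𝔑(σ; m, l)` with `σ` being `t`-sawtooth has classification
error at least `(n - 4(tm)^l)/(3n)` where `n = 2^k`. -/
theorem deep_vs_shallow_refined (k l m t : ℕ) (hk : 0 < k) (hl : 0 < l) (hm : 0 < m)
    (σ : ℝ → ℝ) (hσ : Sawtooth t σ) :
    (∃ f ∈ RNN relu 2 2 k, clsErr (2 ^ k) (apX (2 ^ k)) (apY (2 ^ k)) f = 0) ∧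
    (∀ g ∈ NN σ m l,
      (((2 : ℝ) ^ k - 4 * ((t * m : ℕ) : ℝ) ^ l) / (3 * (2 : ℝ) ^ k)) ≤
        clsErr (2 ^ k) (apX (2 ^ k)) (apY (2 ^ k)) g) := by
  classical
  have h2k : ((2 ^ k : ℕ) : ℝ) = (2:ℝ) ^ k := by push_cast; ring
  constructor
  · refine ⟨fm^[k], ⟨fm, fm_mem_NN, rfl⟩, ?_⟩
    unfold clsErr
    rw [Finset.sum_eq_zero, mul_zero]
    intro i _
    rw [if_pos]
    unfold cls apX apY
    have hx : ((i : ℕ) : ℝ) / ((2 ^ k : ℕ) : ℝ) = ((i : ℕ) : ℝ) / (2:ℝ) ^ k := by rw [h2k]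
    rw [hx, fm_iter k (i : ℕ) (le_of_lt i.isLt)]
    rcases Nat.mod_two_eq_zero_or_one (i : ℕ) with h | h <;> rw [h] <;> norm_num
  · intro g hgNN
    obtain ⟨F, hF, hgF⟩ := hgNN
    obtain ⟨S, hS, hScard⟩ := layers_aff hσ hm hF
    have hgA : AffOff S g := affOff_congr (hS 0) hgF
    have hn : 0 < 2 ^ k := Nat.pow_pos (by norm_num)
    have hcount := counting hgA hn
    unfold clsErr apX apY
    set M := ((Finset.range (2 ^ k)).filter
      (fun i : ℕ => ¬ (cls g ((i : ℝ) / ((2 ^ k : ℕ) : ℝ)) = i % 2))).card with hM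
    have hsum : ∑ i : Fin (2 ^ k),
        (if cls g (((i : ℕ) : ℝ) / ((2 ^ k : ℕ) : ℝ)) = (i : ℕ) % 2 then (0:ℝ) else 1)
          = (M : ℝ) := by
      rw [Fin.sum_univ_eq_sum_range
        (fun i : ℕ => if cls g ((i : ℝ) / ((2 ^ k : ℕ) : ℝ)) = i % 2 then (0:ℝ) else 1)]
      rw [Finset.sum_ite, Finset.sum_const_zero, zero_add, Finset.sum_const,
        nsmul_eq_mul, mul_one, hM]
    rw [hsum]
    have hT0 : (0:ℝ) ≤ ((t * m : ℕ) : ℝ) ^ l := by positivity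
    have hM0 : (0:ℝ) ≤ (M : ℝ) := Nat.cast_nonneg _
    have c1 : ((2:ℝ) ^ k) ≤ 2 * (M : ℝ) + 3 * (S.card : ℝ) + 2 := by
      rw [← h2k]
      exact_mod_cast hcount
    have c2 : (S.card : ℝ) + 1 ≤ ((t * m : ℕ) : ℝ) ^ l := by exact_mod_cast hScard
    have hMlb : (2:ℝ) ^ k - 4 * ((t * m : ℕ) : ℝ) ^ l ≤ 3 * (M : ℝ) := by linarith
    have hpow : (0:ℝ) < (2:ℝ) ^ k := by positivity
    rw [div_le_iff₀ (by positivity)]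
    refine le_trans hMlb (le_of_eq ?_)
    rw [h2k]
    field_simp
end
end

section
/- Let n be a positive integer and let ((x_i, y_i))_{i=0}^{n-1} be the n-ap. Then every t-sawtooth function f : ℝ → ℝ has classification error R_z(f) ≥ (n − 4t)/(3n) on these points. -/
noncomputable section

lemma affine_no_two_changes (c d u1 u2 u3 u4 : ℝ) (h12 : u1 ≤ u2) (h23 : u2 ≤ u3)
    (h34 : u3 ≤ u4)
    (H1 : ¬ ((1/2 ≤ c * u1 + d) ↔ (1/2 ≤ c * u2 + d)))
    (H2 : ¬ ((1/2 ≤ c * u3 + d) ↔ (1/2 ≤ c * u4 + d))) : False := by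
  rcases le_total 0 c with hc | hc
  · have m12 : c * u1 ≤ c * u2 := mul_le_mul_of_nonneg_left h12 hc
    have m23 : c * u2 ≤ c * u3 := mul_le_mul_of_nonneg_left h23 hc
    have m34 : c * u3 ≤ c * u4 := mul_le_mul_of_nonneg_left h34 hc
    have p1' : ¬ 1/2 ≤ c * u1 + d := by
      intro p1; exact H1 ⟨fun _ => by linarith, fun _ => p1⟩
    have p2 : 1/2 ≤ c * u2 + d := by
      by_contra p2; exact H1 (iff_of_false p1' p2)
    exact H2 (iff_of_true (by linarith) (by linarith))
  · have m12 : c * u2 ≤ c * u1 := mul_le_mul_of_nonpos_left h12 hc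
    have m23 : c * u3 ≤ c * u2 := mul_le_mul_of_nonpos_left h23 hc
    have m34 : c * u4 ≤ c * u3 := mul_le_mul_of_nonpos_left h34 hc
    have p4' : ¬ 1/2 ≤ c * u4 + d := by
      intro p4; exact H2 ⟨fun _ => p4, fun _ => by linarith⟩
    have p3 : 1/2 ≤ c * u3 + d := by
      by_contra p3; exact H2 (iff_of_false p3 p4')
    exact H1 (iff_of_true (by linarith) (by linarith))


/-- every `t`-sawtooth function has classification error at least
`(n - 4t)/(3n)` on the `n`-alternating-point problem. -/
theorem sawtooth_clsErr_lb (n t : ℕ) (hn : 0 < n) (f : ℝ → ℝ) (hf : Sawtooth t f) :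
    ((n : ℝ) - 4 * t) / (3 * n) ≤ clsErr n (apX n) (apY n) f := by
  classical
  obtain ⟨b, hb0, hbl, hbm, hbaff⟩ := hf
  have ht : 1 ≤ t := by
    by_contra h
    have h0 : t = 0 := by omega
    subst h0
    rw [show (Fin.last 0) = 0 from rfl, hb0] at hbl
    exact (by simp : (⊥:EReal) ≠ ⊤) hbl
  have hnR : (0:ℝ) < n := by exact_mod_cast hn
  set X : ℕ → ℝ := fun i => (i : ℝ) / n with hX
  have hXmono : ∀ a c : ℕ, a ≤ c → X a ≤ X c := by
    intro a c hac
    have hac' : (a:ℝ) ≤ c := by exact_mod_cast hac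
    show (a:ℝ)/n ≤ (c:ℝ)/n
    gcongr
  -- the piece function
  have hex : ∀ x : ℝ, ∃ i : Fin t, b i.castSucc ≤ (x:EReal) ∧ (x:EReal) < b i.succ := by
    intro x
    have h0 : b 0 ≤ (x:EReal) := hb0 ▸ bot_le
    set s : Finset (Fin (t+1)) := Finset.univ.filter (fun j => b j ≤ (x:EReal)) with hs
    have hsne : s.Nonempty := ⟨0, by simp [hs, h0]⟩
    set j := s.max' hsne with hj
    have hjs : j ∈ s := s.max'_mem hsne
    have hjle : b j ≤ (x:EReal) := by
      have := Finset.mem_filter.mp hjs; exact this.2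
    have hjlt : (j:ℕ) < t := by
      by_contra h
      have hjl : j = Fin.last t := by
        apply Fin.ext
        have := j.isLt
        simp only [Fin.val_last]
        omega
      rw [hjl, hbl] at hjle
      exact absurd (top_le_iff.mp hjle) (EReal.coe_ne_top x)
    refine ⟨⟨(j:ℕ), hjlt⟩, ?_, ?_⟩
    · have hcs : (⟨(j:ℕ), hjlt⟩ : Fin t).castSucc = j := by
        apply Fin.ext; simp
      rw [hcs]; exact hjle
    · by_contra h
      push_neg at h
      have hmem : (⟨(j:ℕ), hjlt⟩ : Fin t).succ ∈ s := by
        simp only [hs, Finset.mem_filter, Finset.mem_univ, true_and]; exact h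
      have hle := s.le_max' _ hmem
      rw [← hj] at hle
      have : ((⟨(j:ℕ), hjlt⟩ : Fin t).succ : ℕ) ≤ (j:ℕ) := hle
      simp at this
  choose p hp1 hp2 using hex
  have hpm : ∀ u v : ℝ, u ≤ v → p u ≤ p v := by
    intro u v huv
    by_contra h
    push_neg at h
    have h1 : (p v).succ ≤ (p u).castSucc := by
      have := Fin.lt_def.mp h
      rw [Fin.le_def]
      simp only [Fin.val_succ, Fin.coe_castSucc]
      omega
    have h2 : (v:EReal) < (u:EReal) :=
      lt_of_lt_of_le (hp2 v) ((hbm h1).trans (hp1 u))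
    have : v < u := by exact_mod_cast h2
    linarith
  -- error / change / no-change sets
  set err : Finset ℕ := (Finset.range n).filter (fun i => ¬ (cls f (X i) = i % 2)) with herr
  set chg : Finset ℕ := (Finset.range (n-1)).filter
      (fun i => ¬ (cls f (X i) = cls f (X (i+1)))) with hchg
  set noc : Finset ℕ := (Finset.range (n-1)).filter
      (fun i => cls f (X i) = cls f (X (i+1))) with hnoc
  -- bound the number of sign changes
  have hchgcard : chg.card ≤ 2 * t := by
    have key : ∀ i ∈ chg, ∀ i' ∈ chg, i < i' →
        p (X (i+1)) = p (X (i'+1)) →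
        ((p (X i) = p (X (i+1))) ↔ (p (X i') = p (X (i'+1)))) → False := by
      intro i hi i' hi' hlt hpe hiff
      have hle1 : i + 1 ≤ i' := hlt
      by_cases hsame : p (X i) = p (X (i+1))
      · have hsame' : p (X i') = p (X (i'+1)) := hiff.mp hsame
        obtain ⟨c, d, haff⟩ := hbaff (p (X (i+1)))
        have fp : ∀ u : ℝ, p u = p (X (i+1)) → f u = c * u + d := by
          intro u hu
          exact haff u (hu ▸ hp1 u) (hu ▸ hp2 u)
        have e1 : f (X i) = c * X i + d := fp _ hsame
        have e2 : f (X (i+1)) = c * X (i+1) + d := fp _ rfl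
        have e3 : f (X i') = c * X i' + d := fp _ (hsame'.trans hpe.symm)
        have e4 : f (X (i'+1)) = c * X (i'+1) + d := fp _ hpe.symm
        have hne1 : ¬ (cls f (X i) = cls f (X (i+1))) := (Finset.mem_filter.mp hi).2
        have hne2 : ¬ (cls f (X i') = cls f (X (i'+1))) := (Finset.mem_filter.mp hi').2
        have H1 : ¬ ((1/2 ≤ c * X i + d) ↔ (1/2 ≤ c * X (i+1) + d)) := by
          intro hif; apply hne1
          simp only [cls, e1, e2]
          rcases iff_iff_and_or_not_and_not.mp hif with ⟨q1, q2⟩ | ⟨q1, q2⟩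
          · rw [if_pos q1, if_pos q2]
          · rw [if_neg q1, if_neg q2]
        have H2 : ¬ ((1/2 ≤ c * X i' + d) ↔ (1/2 ≤ c * X (i'+1) + d)) := by
          intro hif; apply hne2
          simp only [cls, e3, e4]
          rcases iff_iff_and_or_not_and_not.mp hif with ⟨q1, q2⟩ | ⟨q1, q2⟩
          · rw [if_pos q1, if_pos q2]
          · rw [if_neg q1, if_neg q2]
        exact affine_no_two_changes c d (X i) (X (i+1)) (X i') (X (i'+1))
          (hXmono _ _ (Nat.le_succ i)) (hXmono _ _ hle1) (hXmono _ _ (Nat.le_succ i')) H1 H2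
      · have hsame' : ¬ (p (X i') = p (X (i'+1))) := fun h => hsame (hiff.mpr h)
        have m1 : p (X (i+1)) ≤ p (X i') := hpm _ _ (hXmono _ _ hle1)
        have m2 : p (X i') ≤ p (X (i'+1)) := hpm _ _ (hXmono _ _ (Nat.le_succ i'))
        exact hsame' (le_antisymm m2 (hpe ▸ m1))
    have hinj : Set.InjOn (fun i => (p (X (i+1)), decide (p (X i) = p (X (i+1))))) chg := by
      intro i hi i' hi' heq
      simp only [Prod.mk.injEq, decide_eq_decide] at heq
      rcases lt_trichotomy i i' with h | h | h
      · exact absurd (key i (Finset.mem_coe.mp hi) i' (Finset.mem_coe.mp hi') h heq.1 heq.2)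
          not_false
      · exact h
      · exact absurd (key i' (Finset.mem_coe.mp hi') i (Finset.mem_coe.mp hi) h heq.1.symm
          heq.2.symm) not_false
    have h1 := Finset.card_le_card_of_injOn
        (fun i => (p (X (i+1)), decide (p (X i) = p (X (i+1)))))
        (fun a _ => Finset.mem_univ _) hinj
    have h2 : (Finset.univ : Finset (Fin t × Bool)).card = t * 2 := by
      simp [Finset.card_univ]
    omega
  -- partition
  have hpart : noc.card + chg.card = n - 1 := by
    have := Finset.card_filter_add_card_filter_not
      (s := Finset.range (n-1)) (p := fun i => cls f (X i) = cls f (X (i+1)))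
    rw [Finset.card_range] at this
    exact this
  -- errors vs no-change pairs
  have hcount : noc.card ≤ 2 * err.card := by
    set φ : ℕ → ℕ := fun i => if cls f (X i) = i % 2 then i + 1 else i with hφ
    have hmaps : ∀ a ∈ noc, φ a ∈ err := by
      intro a ha
      obtain ⟨har, heqc⟩ := Finset.mem_filter.mp ha
      rw [Finset.mem_range] at har
      by_cases hc : cls f (X a) = a % 2
      · have : φ a = a + 1 := by simp [hφ, hc]
        rw [this, herr, Finset.mem_filter, Finset.mem_range]
        constructor
        · omega
        · rw [← heqc, hc]; omega
      · have : φ a = a := by simp [hφ, hc]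
        rw [this, herr, Finset.mem_filter, Finset.mem_range]
        exact ⟨by omega, hc⟩
    have hfib : ∀ c ∈ err, (noc.filter (fun a => φ a = c)).card ≤ 2 := by
      intro c _
      have hsub : noc.filter (fun a => φ a = c) ⊆ {c, c - 1} := by
        intro a ha
        obtain ⟨_, hac⟩ := Finset.mem_filter.mp ha
        have : a = c ∨ a = c - 1 := by
          by_cases hc : cls f (X a) = a % 2
          · simp only [hφ, hc, if_pos] at hac; omega
          · simp only [hφ, hc, if_neg, not_false_iff] at hac
            left; exact hac
        rcases this with h | h <;> simp [h]
      calc (noc.filter (fun a => φ a = c)).card ≤ ({c, c-1} : Finset ℕ).card :=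
            Finset.card_le_card hsub
        _ ≤ 2 := (Finset.card_insert_le _ _).trans (by simp)
    exact Finset.card_le_mul_card_image_of_maps_to hmaps 2 hfib
  -- value of clsErr
  have hclsErr : clsErr n (apX n) (apY n) f = (err.card : ℝ) / n := by
    rw [clsErr]
    have hsum : ∑ i : Fin n, (if cls f (apX n i) = apY n i then (0:ℝ) else 1)
        = ∑ i ∈ Finset.range n, (if cls f (X i) = i % 2 then (0:ℝ) else 1) := by
      rw [← Fin.sum_univ_eq_sum_range (fun i => if cls f (X i) = i % 2 then (0:ℝ) else 1) n]
      rfl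
    rw [hsum]
    rw [Finset.sum_ite, Finset.sum_const, Finset.sum_const]
    simp only [smul_zero, zero_add, nsmul_eq_mul, mul_one]
    rw [herr]
    rw [inv_mul_eq_div]
  rw [hclsErr, div_le_div_iff₀ (by positivity) hnR]
  have c0 : noc.card + chg.card + 1 = n := by omega
  have c1 : (noc.card : ℝ) + chg.card + 1 = n := by exact_mod_cast c0
  have c2 : (chg.card : ℝ) ≤ 2 * t := by exact_mod_cast hchgcard
  have c3 : (noc.card : ℝ) ≤ 2 * err.card := by exact_mod_cast hcount
  have c4 : (1:ℝ) ≤ t := by exact_mod_cast ht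
  have he0 : (0:ℝ) ≤ (err.card : ℝ) := Nat.cast_nonneg _
  have key : (n:ℝ) - 4 * t ≤ 3 * err.card := by linarith
  nlinarith [mul_le_mul_of_nonneg_right key hnR.le]
end
end

section
/- Let x ∈ [0,1] and a positive integer k be given, and let i_k ∈ {0, 1, …, 2^(k−1)} be the unique nonnegative integer and x_k ∈ [0,1) the unique real with x = (i_k + x_k)·2^(1−k). Then the k-fold composition of the mirror map satisfies f_m^k(x) = 2x_k when 0 ≤ x_k ≤ 1/2, and f_m^k(x) = 2(1 − x_k) when 1/2 < x_k < 1. -/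
noncomputable section

lemma fm_symm (x : ℝ) (h0 : 0 < x) (h1 : x < 1) : fm (1 - x) = fm x := by
  rcases lt_trichotomy x (1/2) with h | h | h
  · rw [fm, fm, if_neg (by push_neg; intro; linarith), if_pos (by constructor <;> linarith),
      if_pos (by constructor <;> linarith)]
    ring
  · subst h; norm_num [fm]
  · rw [fm, fm, if_pos (by constructor <;> linarith),
      if_neg (by push_neg; intro; linarith), if_pos (by constructor <;> linarith)]

lemma fm_key : ∀ n : ℕ, ∀ i : ℕ, i ≤ 2 ^ n → ∀ xk : ℝ, 0 ≤ xk → xk < 1 →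
    ((i : ℝ) + xk) * (2 : ℝ) ^ (-(n : ℤ)) ≤ 1 →
    fm^[n + 1] (((i : ℝ) + xk) * (2 : ℝ) ^ (-(n : ℤ))) = fm xk := by
  intro n
  induction n with
  | zero =>
    intro i hi xk h0 h1 hle
    simp only [pow_zero] at hi
    simp only [Nat.cast_zero, neg_zero, zpow_zero, mul_one] at hle ⊢
    interval_cases i
    · simp
    · have hxk0 : xk = 0 := by push_cast at hle; linarith
      subst hxk0
      norm_num [fm]
  | succ n ih =>
    intro i hi xk h0 h1 hle
    have ht1 : (2 : ℝ) ^ (n : ℕ) * (2 : ℝ) ^ (-(n : ℤ)) = 1 := by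
      rw [← zpow_natCast (2 : ℝ) n, ← zpow_add₀ (two_ne_zero)]
      simp
    have ht : (0 : ℝ) < (2 : ℝ) ^ (-(n : ℤ)) := by positivity
    have hs : (2 : ℝ) ^ (-((n : ℕ) + 1 : ℕ) : ℤ) = (2 : ℝ) ^ (-(n : ℤ)) / 2 := by
      push_cast
      rw [neg_add, zpow_add₀ (two_ne_zero : (2:ℝ) ≠ 0), zpow_neg_one]
      ring
    rw [hs] at hle ⊢
    set t : ℝ := (2 : ℝ) ^ (-(n : ℤ)) with htdef
    rw [Function.iterate_succ_apply]
    have h2t : (2 : ℝ) ^ (n : ℕ) * t = 1 := ht1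
    have hle2 : ((i : ℝ) + xk) * t ≤ 2 := by linarith
    have hin : (i : ℝ) + xk ≤ 2 ^ (n + 1) := by
      nlinarith [hle2, ht, h2t, pow_succ (2:ℝ) n]
    by_cases hA : (i : ℝ) + xk ≤ 2 ^ n
    · -- left half
      have hxle : ((i : ℝ) + xk) * (t / 2) ≤ 1 / 2 := by nlinarith
      have hx0 : 0 ≤ ((i : ℝ) + xk) * (t / 2) := by positivity
      have hfm : fm (((i : ℝ) + xk) * (t / 2)) = ((i : ℝ) + xk) * t := by
        rw [fm, if_pos ⟨hx0, hxle⟩]; ring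
      rw [hfm]
      have hi' : i ≤ 2 ^ n := by exact_mod_cast le_trans (by linarith : (i:ℝ) ≤ 2 ^ n) le_rfl
      exact ih i hi' xk h0 h1 (by nlinarith)
    · push_neg at hA
      have hi2n : 2 ^ n ≤ i := by
        by_contra hc
        push_neg at hc
        have : (i : ℝ) + 1 ≤ 2 ^ n := by exact_mod_cast hc
        linarith
      have hxgt : 1 / 2 < ((i : ℝ) + xk) * (t / 2) := by nlinarith
      have hxle1 : ((i : ℝ) + xk) * (t / 2) ≤ 1 := hle
      have hfm : fm (((i : ℝ) + xk) * (t / 2)) = 2 - ((i : ℝ) + xk) * t := by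
        rw [fm, if_neg (by push_neg; intro _; linarith), if_pos ⟨hxgt, hxle1⟩]; ring
      rw [hfm]
      have h2eq : (2 : ℝ) = 2 ^ (n + 1) * t := by
        rw [pow_succ]; nlinarith
      by_cases hx0 : xk = 0
      · subst hx0
        have hii : i ≤ 2 ^ (n + 1) := by exact_mod_cast le_trans (by linarith : (i:ℝ) ≤ 2 ^ (n+1)) le_rfl
        have hii' : 2 ^ n < i := by exact_mod_cast lt_of_lt_of_le (by linarith : (2:ℝ) ^ n < i) le_rfl
        have hcast : ((2 ^ (n + 1) - i : ℕ) : ℝ) = 2 ^ (n + 1) - (i : ℝ) := by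
          push_cast [Nat.cast_sub hii]; ring
        have heq : 2 - ((i : ℝ) + 0) * t = (((2 ^ (n + 1) - i : ℕ) : ℝ) + 0) * t := by
          rw [hcast]; linear_combination h2eq
        rw [heq]
        exact ih (2 ^ (n + 1) - i) (by omega) 0 le_rfl (by norm_num)
          (by rw [← heq]; linarith)
      · have hx0' : 0 < xk := lt_of_le_of_ne h0 (Ne.symm hx0)
        have hii : i < 2 ^ (n + 1) := by
          have : (i : ℝ) < 2 ^ (n + 1) := by linarith
          exact_mod_cast lt_of_lt_of_le this le_rfl
        have hcast : ((2 ^ (n + 1) - 1 - i : ℕ) : ℝ) = 2 ^ (n + 1) - 1 - (i : ℝ) := by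
          push_cast [Nat.cast_sub (by omega : i ≤ 2 ^ (n+1) - 1), Nat.cast_sub (by omega : 1 ≤ 2 ^ (n+1))]
          ring
        have heq : 2 - ((i : ℝ) + xk) * t
            = (((2 ^ (n + 1) - 1 - i : ℕ) : ℝ) + (1 - xk)) * t := by
          rw [hcast]; linear_combination h2eq
        rw [heq]
        rw [ih (2 ^ (n + 1) - 1 - i) (by omega) (1 - xk) (by linarith) (by linarith)
          (by rw [← heq]; linarith)]
        exact fm_symm xk hx0' h1

/-- explicit formula for the `k`-fold composition of the mirror map:
writing `x = (i + xk) * 2^(1-k)` with `i ∈ {0,…,2^(k-1)}` an integer and `xk ∈ [0,1)`,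
`fm^[k] x = 2 xk` when `xk ≤ 1/2` and `fm^[k] x = 2 (1 - xk)` when `1/2 < xk`. -/
theorem fm_iterate_formula (k : ℕ) (hk : 0 < k) (x : ℝ) (hx : x ∈ Set.Icc (0 : ℝ) 1)
    (i : ℕ) (hi : i ≤ 2 ^ (k - 1)) (xk : ℝ) (hxk : xk ∈ Set.Ico (0 : ℝ) 1)
    (hdecomp : x = ((i : ℝ) + xk) * (2 : ℝ) ^ (1 - (k : ℤ))) :
    (xk ≤ 1 / 2 → fm^[k] x = 2 * xk) ∧ (1 / 2 < xk → fm^[k] x = 2 * (1 - xk)) := by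
  obtain ⟨n, rfl⟩ : ∃ n, k = n + 1 := ⟨k - 1, by omega⟩
  have hexp : (1 - ((n + 1 : ℕ) : ℤ)) = -(n : ℤ) := by push_cast; ring
  rw [hexp] at hdecomp
  simp only [Nat.add_sub_cancel] at hi
  have hmain : fm^[n + 1] x = fm xk := by
    rw [hdecomp]
    exact fm_key n i hi xk hxk.1 hxk.2 (by rw [← hdecomp]; exact hx.2)
  rw [hmain]
  constructor
  · intro h
    rw [fm, if_pos ⟨hxk.1, h⟩]
  · intro h
    rw [fm, if_neg (by push_neg; intro _; linarith), if_pos ⟨h, le_of_lt hxk.2⟩]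
end
end

section
/- Let k be a positive integer and n := 2^k. For every i ∈ {0, 1, …, n−1}, the k-fold composition of the mirror map satisfies f_m^k(i/n) = i mod 2; in particular f_m^k achieves classification error zero on the n-ap. -/
noncomputable section

lemma fm_iter_key (k : ℕ) : ∀ i : ℕ, i ≤ 2 ^ k →
    fm^[k] ((i : ℝ) / 2 ^ k) = ((i % 2 : ℕ) : ℝ) := by
  induction k with
  | zero =>
    intro i hi
    interval_cases i <;> simp
  | succ k ih =>
    intro i hi
    have h2k : (0:ℝ) < 2 ^ k := by positivity
    have h2k1 : (0:ℝ) < 2 ^ (k+1) := by positivity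
    have hps : (2:ℝ) ^ (k+1) = 2 * 2 ^ k := by ring
    rw [Function.iterate_succ_apply]
    by_cases h : i ≤ 2 ^ k
    · have hx : fm ((i:ℝ) / 2 ^ (k+1)) = (i:ℝ) / 2 ^ k := by
        rw [fm, if_pos]
        · rw [pow_succ]; field_simp
        · refine ⟨by positivity, ?_⟩
          rw [div_le_div_iff₀ h2k1 (by norm_num : (0:ℝ) < 2)]
          have : (i:ℝ) ≤ 2 ^ k := by exact_mod_cast h
          nlinarith
      rw [hx]; exact ih i h
    · push_neg at h
      set j := 2 ^ (k+1) - i with hj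
      have hjle : j ≤ 2 ^ k := by
        have : 2 ^ (k+1) = 2 * 2 ^ k := by ring
        omega
      have hile : i ≤ 2 ^ (k+1) := hi
      have hjr : (j:ℝ) = 2 ^ (k+1) - i := by
        rw [hj]; push_cast [Nat.cast_sub hile]; ring
      have hx : fm ((i:ℝ) / 2 ^ (k+1)) = (j:ℝ) / 2 ^ k := by
        rw [fm, if_neg, if_pos]
        · rw [hjr, pow_succ]; field_simp
        · constructor
          · rw [div_lt_div_iff₀ (by norm_num : (0:ℝ) < 2) h2k1]
            have : (2:ℝ) ^ k < (i:ℝ) := by exact_mod_cast h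
            nlinarith
          · rw [div_le_one h2k1]; exact_mod_cast hile
        · push_neg
          intro _
          rw [div_lt_div_iff₀ (by norm_num : (0:ℝ) < 2) h2k1]
          have : (2:ℝ) ^ k < (i:ℝ) := by exact_mod_cast h
          nlinarith
      rw [hx, ih j hjle]
      congr 1
      have h2 : 2 ^ (k+1) = 2 * 2 ^ k := by ring
      omega

/-- with `n = 2^k`, the `k`-fold composition of the mirror map fits the
`n`-alternating-point problem exactly: `fm^[k] (i/n) = i mod 2`, so it has zero
classification error on the `n`-ap. -/
theorem fm_iterate_fits_ap (k : ℕ) (hk : 0 < k) :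
    (∀ i : ℕ, i < 2 ^ k → fm^[k] ((i : ℝ) / (2 ^ k : ℕ)) = ((i % 2 : ℕ) : ℝ)) ∧
    clsErr (2 ^ k) (apX (2 ^ k)) (apY (2 ^ k)) fm^[k] = 0 := by
  have key : ∀ i : ℕ, i < 2 ^ k → fm^[k] ((i : ℝ) / (2 ^ k : ℕ)) = ((i % 2 : ℕ) : ℝ) := by
    intro i hi
    have := fm_iter_key k i hi.le
    simpa using this
  refine ⟨key, ?_⟩
  rw [clsErr]
  have : ∀ i : Fin (2 ^ k),
      (if cls fm^[k] (apX (2 ^ k) i) = apY (2 ^ k) i then (0:ℝ) else 1) = 0 := by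
    intro i
    rw [if_pos]
    rw [cls, apX, apY]
    have h := key i i.isLt
    rw [h]
    rcases Nat.mod_two_eq_zero_or_one (i : ℕ) with h2 | h2 <;> rw [h2] <;> norm_num
  rw [Finset.sum_congr rfl fun i _ => this i]
  simp
end
end

section
/- Let x_1 < x_2 < ⋯ < x_n be real points with alternating labels y_i ∈ {0,1} (i.e., y_{i+1} ≠ y_i for all i), and let g : ℝ → {0,1} be piecewise constant with respect to a partition of ℝ into at most s consecutive intervals. Then the number of indices i with g(x_i) ≠ y_i is at least (n − 2s)/3. -/
noncomputable section

/-- if `x₁ < ⋯ < xₙ` have alternating binary labels and `g : ℝ → {0,1}`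
is piecewise constant w.r.t. at most `s` consecutive intervals, then `g` misclassifies
at least `(n - 2s)/3` of the points. -/
theorem alternating_points_lb (n s : ℕ) (x : Fin n → ℝ) (hx : StrictMono x)
    (y : Fin n → ℕ) (hy01 : ∀ i, y i = 0 ∨ y i = 1)
    (halt : ∀ (i : Fin n) (h : (i : ℕ) + 1 < n), y ⟨(i : ℕ) + 1, h⟩ ≠ y i)
    (g : ℝ → ℕ) (hg01 : ∀ z, g z = 0 ∨ g z = 1) (hg : PiecewiseConst s g) :
    ((n : ℝ) - 2 * s) / 3 ≤ ((Finset.univ.filter fun i => g (x i) ≠ y i).card : ℝ) := by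
  classical
  obtain ⟨b, hb0, hbl, hbmono, hbc⟩ := hg
  choose c hc using hbc
  -- s ≥ 1
  have hs1 : 1 ≤ s := by
    by_contra h
    push_neg at h
    interval_cases s
    rw [show (Fin.last 0) = 0 from rfl, hb0] at hbl
    exact absurd hbl (by simp)
  rcases Nat.eq_zero_or_pos n with hn | hn
  · subst hn
    have h1 : ((0 : ℕ) : ℝ) - 2 * s ≤ 0 := by
      have := Nat.cast_nonneg (α := ℝ) s
      push_cast
      linarith
    have h2 : (0:ℝ) ≤ ((Finset.univ.filter fun i : Fin 0 => g (x i) ≠ y i).card : ℝ) := by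
      positivity
    linarith
  -- interval index of each point
  have hτ : ∀ i : Fin n, ∃ j : Fin s,
      b j.castSucc ≤ (x i : EReal) ∧ (x i : EReal) < b j.succ := by
    intro i
    set S := Finset.univ.filter (fun j : Fin (s+1) => b j ≤ (x i : EReal)) with hS
    have hne : S.Nonempty := ⟨0, by simp [hS, hb0]⟩
    set j := S.max' hne with hj
    have hjmem : j ∈ S := S.max'_mem hne
    have hjle : b j ≤ (x i : EReal) := by
      simpa [hS] using hjmem
    have hjlt : (j : ℕ) < s := by
      rcases Nat.lt_or_ge (j : ℕ) s with h | h
      · exact h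
      · exfalso
        have hjlast : j = Fin.last s := by
          apply Fin.ext
          simpa using Nat.le_antisymm (Nat.le_of_lt_succ j.isLt) h
        rw [hjlast, hbl] at hjle
        exact absurd (top_le_iff.mp hjle) (by simp)
    refine ⟨⟨(j : ℕ), hjlt⟩, ?_, ?_⟩
    · have : (⟨(j : ℕ), hjlt⟩ : Fin s).castSucc = j := by
        apply Fin.ext; simp
      rw [this]; exact hjle
    · by_contra h
      push_neg at h
      have hmem : (⟨(j : ℕ), hjlt⟩ : Fin s).succ ∈ S := by
        simp only [hS, Finset.mem_filter, Finset.mem_univ, true_and]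
        exact h
      have := S.le_max' _ hmem
      rw [← hj] at this
      have : ((⟨(j : ℕ), hjlt⟩ : Fin s).succ : ℕ) ≤ (j : ℕ) := this
      simp at this
  choose τ hτ1 hτ2 using hτ
  have hgτ : ∀ i, g (x i) = c (τ i) := fun i => hc (τ i) (x i) (hτ1 i) (hτ2 i)
  -- τ is monotone
  have hτmono : ∀ i i' : Fin n, i ≤ i' → τ i ≤ τ i' := by
    intro i i' hii
    by_contra h
    push_neg at h
    have h1 : (τ i').succ ≤ (τ i).castSucc := by
      have : (τ i' : ℕ) < (τ i : ℕ) := h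
      simp only [Fin.le_def, Fin.val_succ, Fin.coe_castSucc]
      omega
    have h2 : (x i' : EReal) < (x i : EReal) :=
      lt_of_lt_of_le (hτ2 i') ((hbmono h1).trans (hτ1 i))
    have h3 : x i ≤ x i' := hx.monotone hii
    have := EReal.coe_lt_coe_iff.mp h2
    linarith
  -- successor map
  set nxt : Fin n → Fin n := fun i => if h : (i:ℕ)+1 < n then ⟨(i:ℕ)+1, h⟩ else i with hnxt
  have hnxtval : ∀ i : Fin n, (i:ℕ)+1 < n → ((nxt i : Fin n) : ℕ) = (i:ℕ)+1 := by
    intro i h; simp [hnxt, h]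
  -- pair fact
  have hpair : ∀ i : Fin n, (i:ℕ)+1 < n → τ i = τ (nxt i) →
      (g (x i) ≠ y i ∨ g (x (nxt i)) ≠ y (nxt i)) := by
    intro i h heq
    by_contra hcon
    push_neg at hcon
    obtain ⟨h1, h2⟩ := hcon
    have hgg : g (x i) = g (x (nxt i)) := by rw [hgτ, hgτ, heq]
    have hy : y (nxt i) ≠ y i := by
      have := halt i h
      simpa [hnxt, h] using this
    exact hy (by rw [← h2, ← hgg, h1])
  set E := Finset.univ.filter (fun i : Fin n => g (x i) ≠ y i) with hE
  set A := Finset.univ.filter (fun i : Fin n => (i:ℕ)+1 < n ∧ τ i ≠ τ (nxt i)) with hA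
  set B := Finset.univ.filter (fun i : Fin n => (i:ℕ)+1 < n ∧ τ i = τ (nxt i)) with hB
  -- B.card + A.card = n - 1
  have hsplit : B.card + A.card = n - 1 := by
    have h1 : (Finset.univ.filter (fun i : Fin n => (i:ℕ)+1 < n)).card = n - 1 := by
      have himg : (Finset.univ.filter (fun i : Fin n => (i:ℕ)+1 < n)).image Fin.val
          = Finset.range (n-1) := by
        ext k
        simp only [Finset.mem_image, Finset.mem_filter, Finset.mem_univ, true_and,
          Finset.mem_range]
        constructor
        · rintro ⟨i, hi, rfl⟩; omega
        · intro hk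
          exact ⟨⟨k, by omega⟩, by simp; omega, rfl⟩
      have hcard := Finset.card_image_of_injective
        (Finset.univ.filter (fun i : Fin n => (i:ℕ)+1 < n)) (Fin.val_injective)
      rw [himg, Finset.card_range] at hcard
      omega
    have h2 : B = (Finset.univ.filter (fun i : Fin n => (i:ℕ)+1 < n)).filter
        (fun i => τ i = τ (nxt i)) := by
      rw [hB, Finset.filter_filter]
    have h3 : A = (Finset.univ.filter (fun i : Fin n => (i:ℕ)+1 < n)).filter
        (fun i => ¬ τ i = τ (nxt i)) := by
      rw [hA, Finset.filter_filter]
    rw [h2, h3, Finset.card_filter_add_card_filter_not, h1]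
  -- A.card ≤ s - 1
  haveI : NeZero s := ⟨by omega⟩
  have hAcard : A.card ≤ s - 1 := by
    have hkey : ∀ i i' : Fin n, i ∈ A → i' ∈ A → i < i' → τ (nxt i) < τ (nxt i') := by
      intro i i' hi hi' hlt
      simp only [hA, Finset.mem_filter, Finset.mem_univ, true_and] at hi hi'
      have h1 : nxt i ≤ i' := by
        rw [Fin.le_def, hnxtval i hi.1]
        exact hlt
      have h2 : τ (nxt i) ≤ τ i' := hτmono _ _ h1
      have h3 : τ i' < τ (nxt i') :=
        lt_of_le_of_ne (hτmono _ _ (by rw [Fin.le_def, hnxtval i' hi'.1]; omega)) hi'.2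
      exact lt_of_le_of_lt h2 h3
    have hmaps : ∀ i ∈ A, τ (nxt i) ∈ Finset.univ.filter (fun j : Fin s => j ≠ 0) := by
      intro i hi
      have hi' := hi
      simp only [hA, Finset.mem_filter, Finset.mem_univ, true_and] at hi'
      have h3 : τ i < τ (nxt i) :=
        lt_of_le_of_ne (hτmono _ _ (by rw [Fin.le_def, hnxtval i hi'.1]; omega)) hi'.2
      simp only [Finset.mem_filter, Finset.mem_univ, true_and]
      intro h0
      rw [h0] at h3
      have : (τ i : ℕ) < (0 : Fin s) := h3
      simp at this
    have hinj : Set.InjOn (fun i => τ (nxt i)) A := by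
      intro i hi i' hi' heq
      rcases lt_trichotomy i i' with h | h | h
      · exact absurd heq (ne_of_lt (hkey i i' hi hi' h))
      · exact h
      · exact absurd heq.symm (ne_of_lt (hkey i' i hi' hi h))
    have := Finset.card_le_card_of_injOn _ hmaps hinj
    have hfc : (Finset.univ.filter (fun j : Fin s => j ≠ 0)).card = s - 1 := by
      rw [Finset.filter_ne', Finset.card_erase_of_mem (Finset.mem_univ _)]
      simp
    omega
  -- B.card ≤ 2 * E.card
  have hφmem : ∀ i ∈ B, (if g (x i) ≠ y i then i else nxt i) ∈ E := by
    intro i hi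
    simp only [hB, Finset.mem_filter, Finset.mem_univ, true_and] at hi
    by_cases hgi : g (x i) ≠ y i
    · rw [if_pos hgi, hE]
      exact Finset.mem_filter.mpr ⟨Finset.mem_univ _, hgi⟩
    · rw [if_neg hgi, hE]
      exact Finset.mem_filter.mpr ⟨Finset.mem_univ _,
        (hpair i hi.1 hi.2).resolve_left hgi⟩
  have hfib : ∀ e : Fin n,
      (B.filter (fun i => (if g (x i) ≠ y i then i else nxt i) = e)).card ≤ 2 := by
    intro e
    have hsub : B.filter (fun i => (if g (x i) ≠ y i then i else nxt i) = e) ⊆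
        {e} ∪ Finset.univ.filter (fun i : Fin n => (i:ℕ)+1 = (e:ℕ)) := by
      intro i hi
      simp only [Finset.mem_filter] at hi
      obtain ⟨hiB, hie⟩ := hi
      simp only [hB, Finset.mem_filter, Finset.mem_univ, true_and] at hiB
      simp only [Finset.mem_union, Finset.mem_singleton, Finset.mem_filter,
        Finset.mem_univ, true_and]
      by_cases hgi : g (x i) ≠ y i
      · left; rw [← hie, if_pos hgi]
      · right
        rw [if_neg hgi] at hie
        rw [← hie, hnxtval i hiB.1]
    have h1 : (Finset.univ.filter (fun i : Fin n => (i:ℕ)+1 = (e:ℕ))).card ≤ 1 := by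
      apply Finset.card_le_one.mpr
      intro a ha b' hb'
      simp only [Finset.mem_filter, Finset.mem_univ, true_and] at ha hb'
      apply Fin.ext; omega
    have h2 := Finset.card_union_le ({e} : Finset (Fin n))
      (Finset.univ.filter (fun i : Fin n => (i:ℕ)+1 = (e:ℕ)))
    have h3 := Finset.card_le_card hsub
    have h4 : ({e} : Finset (Fin n)).card = 1 := Finset.card_singleton e
    omega
  have hBE : B.card ≤ 2 * E.card := by
    have himgsub : B.image (fun i => if g (x i) ≠ y i then i else nxt i) ⊆ E := by
      intro e he
      simp only [Finset.mem_image] at he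
      obtain ⟨i, hi, rfl⟩ := he
      exact hφmem i hi
    have hmain : B.card ≤ 2 * (B.image (fun i => if g (x i) ≠ y i then i else nxt i)).card := by
      apply Finset.card_le_mul_card_image
      intro e _
      exact hfib e
    have := Finset.card_le_card himgsub
    omega
  -- conclude
  have hnat : n ≤ 2 * E.card + s := by omega
  have hreal : (n : ℝ) ≤ 2 * E.card + s := by exact_mod_cast hnat
  have hEnn : (0:ℝ) ≤ (E.card : ℝ) := by positivity
  have hsnn : (0:ℝ) ≤ (s : ℝ) := by positivity
  rw [hE] at hreal hEnn ⊢
  linarith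
end
end
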